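/- arXiv:0705.1773 — 4 statements merged into one kernel-verified Lean document; each statement's English description precedes it below -/
import Mathlib

section
/- Let 0 < α < 1 and a, b > 0, and let x : [0,∞) → [0,∞) be a continuous function such that for every t ≥ 0 one has x(t) ≤ a + b t^α ∫_0^t (t−s)^{−α} s^{−α} x(s) ds. Then for every t ≥ 0, x(t) ≤ a c_α exp(d_α t b^{1/(1−α)}), where c_α = 4e² Γ(1−α)/(1−α) and d_α = 2 (Γ(1−α))^{1/(1−α)}. -/
open MeasureTheory Set Real Filter intervalIntegral Nat

lemma rpow_bound {lo hi z r : ℝ} (hlo : 0 < lo) (h1 : lo ≤ z) (h2 : z ≤ hi) :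
    z ^ r ≤ lo ^ r + hi ^ r := by
  rcases le_total 0 r with h | h
  · have := rpow_le_rpow (by linarith) h2 h
    have h0 : (0:ℝ) ≤ lo ^ r := rpow_nonneg hlo.le _
    linarith
  · have := rpow_le_rpow_of_nonpos hlo h1 h
    have h0 : (0:ℝ) ≤ hi ^ r := rpow_nonneg (by linarith) _
    linarith

/-- Integrability of the scaled beta integrand. -/
lemma betaIntegrable {p q t : ℝ} (hp : 0 < p) (hq : 0 < q) (ht : 0 < t) :
    IntervalIntegrable (fun u => u ^ (p - 1) * (t - u) ^ (q - 1)) volume 0 t := by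
  have h1 : IntervalIntegrable (fun u => u ^ (p - 1) * (t - u) ^ (q - 1)) volume 0 (t/2) := by
    have hg : IntervalIntegrable (fun u : ℝ => u ^ (p - 1)) volume 0 (t/2) :=
      intervalIntegrable_rpow' (by linarith)
    rw [intervalIntegrable_iff, uIoc_of_le (by linarith)] at hg ⊢
    have hmeas : AEStronglyMeasurable (fun u : ℝ => (t - u) ^ (q - 1))
        (volume.restrict (Ioc 0 (t/2))) := by
      apply ContinuousOn.aestronglyMeasurable _ measurableSet_Ioc
      apply ContinuousOn.rpow_const (by fun_prop)
      intro u hu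
      exact Or.inl (by simp only [mem_Ioc] at hu; intro h; linarith [hu.1, hu.2] : t - u ≠ 0)
    have := Integrable.bdd_mul (c := (t/2) ^ (q-1) + t ^ (q-1)) hg hmeas ?_
    · exact this.congr (Eventually.of_forall fun u => by ring)
    · rw [ae_restrict_iff' measurableSet_Ioc]
      filter_upwards with u hu
      simp only [mem_Ioc] at hu
      rw [Real.norm_eq_abs, abs_of_nonneg (rpow_nonneg (by linarith [hu.2] : (0:ℝ) ≤ t - u) _)]
      exact rpow_bound (by linarith) (by linarith [hu.2]) (by linarith [hu.1])
  have h2 : IntervalIntegrable (fun u => u ^ (p - 1) * (t - u) ^ (q - 1)) volume (t/2) t := by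
    have hg0 : IntervalIntegrable (fun u : ℝ => u ^ (q - 1)) volume 0 (t/2) :=
      intervalIntegrable_rpow' (by linarith)
    have hg : IntervalIntegrable (fun u : ℝ => (t - u) ^ (q - 1)) volume (t/2) t := by
      have := hg0.comp_sub_left t
      simpa [show t - t/2 = t/2 by ring] using this.symm
    rw [intervalIntegrable_iff, uIoc_of_le (by linarith)] at hg ⊢
    have hmeas : AEStronglyMeasurable (fun u : ℝ => u ^ (p - 1))
        (volume.restrict (Ioc (t/2) t)) := by
      apply ContinuousOn.aestronglyMeasurable _ measurableSet_Ioc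
      apply ContinuousOn.rpow_const (by fun_prop)
      intro u hu
      exact Or.inl (by simp only [mem_Ioc] at hu; intro h; linarith [hu.1] : u ≠ 0)
    exact Integrable.bdd_mul (c := (t/2) ^ (p-1) + t ^ (p-1)) hg hmeas (by
      rw [ae_restrict_iff' measurableSet_Ioc]
      filter_upwards with u hu
      simp only [mem_Ioc] at hu
      rw [Real.norm_eq_abs, abs_of_nonneg (rpow_nonneg (by linarith [hu.1] : (0:ℝ) ≤ u) _)]
      exact rpow_bound (by linarith) (by linarith [hu.1]) (by linarith [hu.2]))
  exact h1.trans h2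

lemma betaEval {p q t : ℝ} (hp : 0 < p) (hq : 0 < q) (ht : 0 < t) :
    ∫ u in (0:ℝ)..t, u ^ (p - 1) * (t - u) ^ (q - 1)
      = t ^ (p + q - 1) * (Real.Gamma p * Real.Gamma q / Real.Gamma (p + q)) := by
  have hC : ∫ u in (0:ℝ)..t, (u:ℂ) ^ ((p:ℂ) - 1) * ((t:ℂ) - u) ^ ((q:ℂ) - 1)
      = (t:ℂ) ^ ((p:ℂ) + q - 1) * Complex.betaIntegral p q :=
    Complex.betaIntegral_scaled p q ht
  have hne : Complex.Gamma ((p:ℂ) + q) ≠ 0 := by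
    rw [show ((p:ℂ) + q) = ((p + q : ℝ) : ℂ) by push_cast; ring, Complex.Gamma_ofReal]
    exact_mod_cast (Real.Gamma_pos_of_pos (by linarith)).ne'
  have hbeta : Complex.betaIntegral p q
      = Complex.Gamma p * Complex.Gamma q / Complex.Gamma ((p:ℂ) + q) := by
    have h := Complex.Gamma_mul_Gamma_eq_betaIntegral (s := (p:ℂ)) (t := (q:ℂ))
      (by simpa using hp) (by simpa using hq)
    rw [h]
    field_simp
  apply Complex.ofReal_injective
  rw [← intervalIntegral.integral_ofReal]
  have hcongr : ∫ u in (0:ℝ)..t, ((u ^ (p-1) * (t-u) ^ (q-1) : ℝ) : ℂ)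
      = ∫ u in (0:ℝ)..t, (u:ℂ) ^ ((p:ℂ) - 1) * ((t:ℂ) - u) ^ ((q:ℂ) - 1) := by
    apply intervalIntegral.integral_congr
    intro u hu
    rw [uIcc_of_le ht.le] at hu
    push_cast
    rw [Complex.ofReal_cpow hu.1, Complex.ofReal_cpow (by linarith [hu.2] : (0:ℝ) ≤ t - u)]
    push_cast
    ring
  rw [hcongr, hC, hbeta]
  rw [show ((p:ℂ) + q - 1) = ((p + q - 1 : ℝ) : ℂ) by push_cast; ring,
    ← Complex.ofReal_cpow ht.le, show ((p:ℂ) + q) = ((p + q : ℝ) : ℂ) by push_cast; ring,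
    Complex.Gamma_ofReal, Complex.Gamma_ofReal, Complex.Gamma_ofReal]
  push_cast
  ring

lemma gamma_ge_base {y : ℝ} (h1 : 1 ≤ y) : Real.exp (-1) ≤ Real.Gamma y := by
  rw [Real.Gamma_eq_integral (by linarith)]
  have hint : IntegrableOn (fun x : ℝ => Real.exp (-x) * x ^ (y - 1)) (Ioi 0) volume :=
    Real.GammaIntegral_convergent (by linarith)
  have h2 : (∫ x in Ioi (1:ℝ), Real.exp (-x)) ≤ ∫ x in Ioi (1:ℝ), Real.exp (-x) * x ^ (y-1) := by
    apply setIntegral_mono_on (by simpa using exp_neg_integrableOn_Ioi 1 one_pos)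
      (hint.mono_set (Ioi_subset_Ioi one_pos.le)) measurableSet_Ioi
    intro x hx
    simp only [mem_Ioi] at hx
    nth_rewrite 1 [← mul_one (Real.exp (-x))]
    apply mul_le_mul_of_nonneg_left _ (Real.exp_nonneg _)
    exact Real.one_le_rpow hx.le (by linarith)
  have h3 : (∫ x in Ioi (1:ℝ), Real.exp (-x) * x ^ (y-1))
      ≤ ∫ x in Ioi (0:ℝ), Real.exp (-x) * x ^ (y-1) := by
    apply setIntegral_mono_set hint
    · refine (ae_restrict_iff' measurableSet_Ioi).2 ?_
      filter_upwards with u hu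
      exact mul_nonneg (Real.exp_nonneg _) (Real.rpow_nonneg (le_of_lt hu) _)
    · exact HasSubset.Subset.eventuallyLE (Ioi_subset_Ioi one_pos.le)
  calc Real.exp (-1) = ∫ x in Ioi (1:ℝ), Real.exp (-x) := (integral_exp_neg_Ioi 1).symm
    _ ≤ _ := h2
    _ ≤ _ := h3

lemma gamma_ge_small {y : ℝ} (h0 : 0 < y) : Real.exp (-1) ≤ Real.Gamma y := by
  rcases le_or_gt 1 y with h | h
  · exact gamma_ge_base h
  · have hy : y ≠ 0 := h0.ne'
    have hrec : Real.Gamma (y + 1) = y * Real.Gamma y := Real.Gamma_add_one hy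
    have h1 : Real.exp (-1) ≤ Real.Gamma (y + 1) := gamma_ge_base (by linarith)
    have h2 : Real.Gamma y > 0 := Real.Gamma_pos_of_pos h0
    nlinarith

lemma gamma_ge_fact_aux (k : ℕ) : ∀ y : ℝ, (k : ℝ) + 1 ≤ y → y < (k : ℝ) + 2 →
    Real.exp (-1) * (k ! : ℝ) ≤ Real.Gamma y := by
  induction k with
  | zero => intro y h1 _; simpa using gamma_ge_base (by push_cast at h1; linarith)
  | succ k ih =>
    intro y h1 h2
    push_cast at h1 h2
    have hy1 : y - 1 ≠ 0 := by intro h; nlinarith [Nat.cast_nonneg (α := ℝ) k]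
    have hrec : Real.Gamma y = (y - 1) * Real.Gamma (y - 1) := by
      have := Real.Gamma_add_one hy1
      simpa using this
    have hih := ih (y - 1) (by push_cast; linarith) (by push_cast; linarith)
    have hpos : 0 < Real.Gamma (y - 1) :=
      Real.Gamma_pos_of_pos (by nlinarith [Nat.cast_nonneg (α := ℝ) k])
    have hk1 : ((k:ℝ) + 1) ≤ y - 1 := by linarith
    calc Real.exp (-1) * ((k+1)! : ℝ) = ((k:ℝ)+1) * (Real.exp (-1) * k !) := by
          push_cast [Nat.factorial_succ]; ring
      _ ≤ ((k:ℝ)+1) * Real.Gamma (y-1) := by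
          apply mul_le_mul_of_nonneg_left hih (by positivity)
      _ ≤ (y - 1) * Real.Gamma (y-1) := by
          apply mul_le_mul_of_nonneg_right hk1 hpos.le
      _ = Real.Gamma y := hrec.symm

lemma gamma_ge_fact {y : ℝ} (h0 : 0 < y) :
    Real.exp (-1) * ((⌊y⌋₊ - 1)! : ℝ) ≤ Real.Gamma y := by
  rcases lt_or_ge y 2 with h | h
  · have : (⌊y⌋₊ - 1) = 0 := by
      have : ⌊y⌋₊ < 2 := by
        rw [Nat.floor_lt h0.le]; push_cast; linarith
      omega
    rw [this]
    simpa using gamma_ge_small h0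
  · have h2 : 2 ≤ ⌊y⌋₊ := by
      rw [Nat.le_floor_iff h0.le]; push_cast; linarith
    obtain ⟨k, hk⟩ : ∃ k, ⌊y⌋₊ = k + 2 := ⟨⌊y⌋₊ - 2, by omega⟩
    have hfl := Nat.floor_le (by linarith : (0:ℝ) ≤ y)
    have hfu := Nat.lt_floor_add_one y
    rw [hk] at hfl hfu
    push_cast at hfl hfu
    have := gamma_ge_fact_aux (k+1) y (by push_cast; linarith) (by push_cast; linarith)
    rw [hk]
    convert this using 3
    rfl

lemma sq_le_exp {w : ℝ} (hw : 0 ≤ w) : w ^ 2 ≤ Real.exp w := by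
  have h := Real.sum_le_exp_of_nonneg hw 4
  have hsum : ∑ i ∈ Finset.range 4, w ^ i / (Nat.factorial i : ℝ)
      = 1 + w + w^2/2 + w^3/6 := by
    simp [Finset.sum_range_succ, Nat.factorial]
  rw [hsum] at h
  nlinarith [mul_nonneg hw (sq_nonneg (w - 3)), sq_nonneg (2*w - 1)]

lemma series_bound {s w : ℝ} (hs0 : 0 < s) (hs1 : s < 1) (hw : 0 ≤ w) (N : ℕ) :
    ∑ n ∈ Finset.range N, w ^ ((n:ℝ) * s) / Real.Gamma (((n:ℝ) + 1) * s)
      ≤ 4 * Real.exp 2 / s * Real.exp (2 * w) := by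
  set v := max 1 w with hv
  have hv1 : (1:ℝ) ≤ v := le_max_left _ _
  have hv0 : (0:ℝ) ≤ v := by linarith
  set g : ℕ → ℝ := fun k => Real.exp 1 * v ^ (k+1) / ((k-1)! : ℝ) with hgdef
  have hgnn : ∀ k, 0 ≤ g k := fun k => by
    apply div_nonneg _ (Nat.cast_nonneg _)
    positivity
  set κ : ℕ → ℕ := fun n => ⌊((n:ℝ) + 1) * s⌋₊ with hκ
  have hterm : ∀ n : ℕ, w ^ ((n:ℝ) * s) / Real.Gamma (((n:ℝ)+1) * s) ≤ g (κ n) := by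
    intro n
    have hy0 : (0:ℝ) < ((n:ℝ)+1) * s := by positivity
    have hGam := gamma_ge_fact hy0
    have hnum : w ^ ((n:ℝ) * s) ≤ v ^ (κ n + 1) := by
      rcases le_or_gt w 1 with h | h
      · have hveq : v = 1 := max_eq_left h
        rw [hveq, one_pow]
        exact Real.rpow_le_one hw h (by positivity)
      · have hveq : v = w := max_eq_right h.le
        rw [hveq, ← Real.rpow_natCast w (κ n + 1)]
        apply Real.rpow_le_rpow_of_exponent_le h.le
        push_cast
        calc (n:ℝ) * s ≤ ((n:ℝ)+1) * s := by nlinarith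
          _ ≤ (κ n : ℝ) + 1 := (Nat.lt_floor_add_one _).le
    have hfactpos : (0:ℝ) < ((κ n - 1)! : ℝ) := by exact_mod_cast Nat.factorial_pos _
    calc w ^ ((n:ℝ) * s) / Real.Gamma (((n:ℝ)+1) * s)
        ≤ v ^ (κ n + 1) / (Real.exp (-1) * ((κ n - 1)! : ℝ)) := by
          apply div_le_div₀ (by positivity) hnum (by positivity) hGam
      _ = g (κ n) := by
          rw [hgdef, Real.exp_neg]
          field_simp
  have hsum1 : ∑ n ∈ Finset.range N, w ^ ((n:ℝ) * s) / Real.Gamma (((n:ℝ)+1) * s)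
      ≤ ∑ n ∈ Finset.range N, g (κ n) := Finset.sum_le_sum fun n _ => hterm n
  have hcomp := Finset.sum_comp (s := Finset.range N) g κ
  have hcard : ∀ k ∈ (Finset.range N).image κ,
      ((((Finset.range N).filter (fun n => κ n = k)).card : ℝ)) ≤ 2 / s := by
    intro k hk
    set F := (Finset.range N).filter (fun n => κ n = k) with hF
    have hFne : F.Nonempty := by
      rw [Finset.mem_image] at hk; obtain ⟨n, hn, hkn⟩ := hk
      exact ⟨n, Finset.mem_filter.2 ⟨hn, hkn⟩⟩
    set n₀ := F.min' hFne with hn₀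
    have hn₀F : n₀ ∈ F := F.min'_mem hFne
    have hsub : F ⊆ Finset.Icc n₀ (n₀ + ⌊1/s⌋₊) := by
      intro n hn
      rw [Finset.mem_Icc]
      have hle : n₀ ≤ n := F.min'_le n hn
      refine ⟨hle, ?_⟩
      have h1 : κ n = k := (Finset.mem_filter.1 hn).2
      have h2 : κ n₀ = k := (Finset.mem_filter.1 hn₀F).2
      have hlt : ((n:ℝ)+1) * s < (k:ℝ) + 1 := by
        have h3 := Nat.lt_floor_add_one (((n:ℝ)+1)*s)
        rw [show ⌊((n:ℝ)+1)*s⌋₊ = k from h1] at h3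
        exact h3
      have hge : (k:ℝ) ≤ ((n₀:ℝ)+1) * s := by
        have h4 := Nat.floor_le (le_of_lt (by positivity : (0:ℝ) < ((n₀:ℝ)+1)*s))
        rw [show ⌊((n₀:ℝ)+1)*s⌋₊ = k from h2] at h4
        exact h4
      have hcast : ((n - n₀ : ℕ) : ℝ) ≤ 1/s := by
        rw [Nat.cast_sub hle]
        rw [le_div_iff₀ hs0]
        nlinarith
      have := Nat.le_floor hcast
      omega
    have hcard2 := Finset.card_le_card hsub
    rw [Nat.card_Icc] at hcard2
    have hcard3 : F.card ≤ ⌊1/s⌋₊ + 1 := by omega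
    have hfl : (⌊1/s⌋₊ : ℝ) ≤ 1/s := Nat.floor_le (by positivity)
    have h1s : (1:ℝ) ≤ 1/s := by rw [le_div_iff₀ hs0]; linarith
    have h2s : 1/s + 1/s = 2/s := by ring
    calc (F.card : ℝ) ≤ (⌊1/s⌋₊ : ℝ) + 1 := by exact_mod_cast hcard3
      _ ≤ 1/s + 1/s := by linarith
      _ = 2/s := h2s
  have himg : (Finset.range N).image κ ⊆ Finset.range (N+1) := by
    intro k hk
    rw [Finset.mem_image] at hk
    obtain ⟨n, hn, rfl⟩ := hk
    rw [Finset.mem_range] at hn ⊢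
    have h5 : ((n:ℝ)+1) * s < (n:ℝ) + 1 := by nlinarith [Nat.cast_nonneg (α := ℝ) n]
    have h6 : κ n < n + 1 := by
      rw [hκ, Nat.floor_lt (by positivity)]
      push_cast
      exact h5
    omega
  have hsum2 : ∑ k ∈ (Finset.range N).image κ,
        (((Finset.range N).filter (fun n => κ n = k)).card) • g k
      ≤ ∑ k ∈ (Finset.range N).image κ, 2/s * g k := by
    apply Finset.sum_le_sum
    intro k hk
    rw [nsmul_eq_mul]
    exact mul_le_mul_of_nonneg_right (hcard k hk) (hgnn k)
  have hsum3 : ∑ k ∈ (Finset.range N).image κ, 2/s * g k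
      ≤ ∑ k ∈ Finset.range (N+1), 2/s * g k := by
    apply Finset.sum_le_sum_of_subset_of_nonneg himg
    intro k _ _
    exact mul_nonneg (by positivity) (hgnn k)
  have hsum4 : ∑ k ∈ Finset.range (N+1), g k
      ≤ Real.exp 1 * (v + v^2 * Real.exp v) := by
    rw [Finset.sum_range_succ' g N]
    have h0 : g 0 = Real.exp 1 * v := by simp [hgdef]
    have hj : ∀ j, g (j+1) = Real.exp 1 * v^2 * (v^j / ((j)! : ℝ)) := by
      intro j
      rw [hgdef]
      simp only [Nat.add_sub_cancel]
      field_simp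
      ring
    rw [h0]
    have : ∑ j ∈ Finset.range N, g (j+1)
        = Real.exp 1 * v^2 * ∑ j ∈ Finset.range N, v^j / ((j)! : ℝ) := by
      rw [Finset.mul_sum]
      exact Finset.sum_congr rfl fun j _ => hj j
    rw [this]
    have hexp := Real.sum_le_exp_of_nonneg hv0 N
    have hmul := mul_le_mul_of_nonneg_left hexp
      (by positivity : (0:ℝ) ≤ Real.exp 1 * v^2)
    linarith
  have hfin : Real.exp 1 * (v + v^2 * Real.exp v) ≤ 2 * Real.exp 2 * Real.exp (2*w) := by
    have hev1 : (1:ℝ) ≤ Real.exp v := Real.one_le_exp hv0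
    have hv2 : v ≤ v^2 * Real.exp v := by nlinarith
    have hkey : v^2 * Real.exp v ≤ Real.exp 1 * Real.exp (2*w) := by
      rcases le_or_gt w 1 with h | h
      · have hveq : v = 1 := max_eq_left h
        rw [hveq]
        have h1 : Real.exp 1 ≤ Real.exp 1 * Real.exp (2*w) := by
          nlinarith [Real.one_le_exp (by linarith : (0:ℝ) ≤ 2*w), Real.exp_pos 1]
        simpa using h1
      · have hveq : v = w := max_eq_right h.le
        rw [hveq]
        have hsq := sq_le_exp hw
        calc w^2 * Real.exp w ≤ Real.exp w * Real.exp w := by nlinarith [Real.exp_pos w]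
          _ = Real.exp (2*w) := by rw [← Real.exp_add]; ring_nf
          _ ≤ Real.exp 1 * Real.exp (2*w) := by
              nlinarith [Real.one_le_exp (le_of_lt one_pos), Real.exp_pos (2*w)]
    have he2 : Real.exp 1 * Real.exp 1 = Real.exp 2 := by
      rw [← Real.exp_add]; norm_num
    nlinarith [Real.exp_pos 1, Real.exp_pos (2*w)]
  calc ∑ n ∈ Finset.range N, w ^ ((n:ℝ) * s) / Real.Gamma (((n:ℝ)+1) * s)
      ≤ ∑ n ∈ Finset.range N, g (κ n) := hsum1
    _ = _ := hcomp
    _ ≤ ∑ k ∈ (Finset.range N).image κ, 2/s * g k := hsum2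
    _ ≤ ∑ k ∈ Finset.range (N+1), 2/s * g k := hsum3
    _ = 2/s * ∑ k ∈ Finset.range (N+1), g k := by rw [Finset.mul_sum]
    _ ≤ 2/s * (Real.exp 1 * (v + v^2 * Real.exp v)) := by
        apply mul_le_mul_of_nonneg_left hsum4 (by positivity)
    _ ≤ 2/s * (2 * Real.exp 2 * Real.exp (2*w)) := by
        apply mul_le_mul_of_nonneg_left hfin (by positivity)
    _ = 4 * Real.exp 2 / s * Real.exp (2 * w) := by ring

set_option maxHeartbeats 2000000 in
/-- Proposition 1 (Lemma 7.6 of Nualart–Răşcanu): a Gronwall-type estimate with a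
weakly singular kernel. -/
theorem stmt_0 (α a b : ℝ) (hα0 : 0 < α) (hα1 : α < 1) (ha : 0 < a) (hb : 0 < b)
    (x : ℝ → ℝ) (hcont : ContinuousOn x (Set.Ici 0)) (hnonneg : ∀ t, 0 ≤ t → 0 ≤ x t)
    (hineq : ∀ t, 0 ≤ t →
      x t ≤ a + b * t ^ α * ∫ s in (0:ℝ)..t, (t - s) ^ (-α) * s ^ (-α) * x s) :
    ∀ t, 0 ≤ t →
      x t ≤ a * (4 * Real.exp 2 * Real.Gamma (1 - α) / (1 - α)) *
        Real.exp (2 * Real.Gamma (1 - α) ^ (1 / (1 - α)) * t * b ^ (1 / (1 - α))) := by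
  intro t₀ ht₀
  set β : ℝ := 1 - α with hβ
  have hβ0 : 0 < β := by rw [hβ]; linarith
  have hβ1 : β < 1 := by rw [hβ]; linarith
  set G : ℝ := Real.Gamma β with hG
  have hG0 : 0 < G := Real.Gamma_pos_of_pos hβ0
  -- bound for x on [0, t₀]
  obtain ⟨M, hM⟩ := (isCompact_Icc (a := (0:ℝ)) (b := t₀)).exists_bound_of_continuousOn
    (hcont.mono (fun u hu => hu.1))
  have hxM : ∀ u ∈ Icc (0:ℝ) t₀, x u ≤ M := fun u hu => (le_abs_self _).trans (hM u hu)
  have hM0 : 0 ≤ M := (norm_nonneg _).trans (hM 0 ⟨le_refl 0, ht₀⟩)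
  set coef : ℕ → ℝ := fun n => (b * G) ^ n * G / Real.Gamma (((n:ℝ) + 1) * β) with hcoef
  have hcoefpos : ∀ n, 0 < coef n := by
    intro n
    apply div_pos (by positivity) (Real.Gamma_pos_of_pos (by positivity))
  -- the key integral computation
  have hψint : ∀ (t : ℝ), 0 < t → ∀ n : ℕ,
      IntervalIntegrable (fun u => (t - u) ^ (-α) * u ^ (-α) * u ^ ((n:ℝ) * β))
        volume 0 t := by
    intro t ht n
    have hbase := betaIntegrable (p := ((n:ℝ)+1) * β) (q := β) (by positivity) hβ0 ht
    rw [intervalIntegrable_iff, uIoc_of_le ht.le] at hbase ⊢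
    apply hbase.congr_fun _ measurableSet_Ioc
    intro u hu
    simp only [mem_Ioc] at hu
    have h1 : u ^ (((n:ℝ)+1) * β - 1) = u ^ (-α) * u ^ ((n:ℝ) * β) := by
      rw [← Real.rpow_add hu.1]
      congr 1
      rw [hβ]; ring
    have h2 : (β - 1 : ℝ) = -α := by rw [hβ]; ring
    simp only [h1, h2]
    ring
  have hψval : ∀ (t : ℝ), 0 < t → ∀ n : ℕ,
      coef n * (b * t ^ α * ∫ u in (0:ℝ)..t, (t - u) ^ (-α) * u ^ (-α) * u ^ ((n:ℝ) * β))
        = coef (n+1) * t ^ (((n:ℝ)+1) * β) := by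
    intro t ht n
    have hp : (0:ℝ) < ((n:ℝ)+1) * β := by positivity
    have hcongr : (∫ u in (0:ℝ)..t, (t - u) ^ (-α) * u ^ (-α) * u ^ ((n:ℝ) * β))
        = ∫ u in (0:ℝ)..t, u ^ (((n:ℝ)+1) * β - 1) * (t - u) ^ (β - 1) := by
      rw [intervalIntegral.integral_of_le ht.le, intervalIntegral.integral_of_le ht.le]
      apply setIntegral_congr_fun measurableSet_Ioc
      intro u hu
      simp only [mem_Ioc] at hu
      have h1 : u ^ (((n:ℝ)+1) * β - 1) = u ^ (-α) * u ^ ((n:ℝ) * β) := by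
        rw [← Real.rpow_add hu.1]; congr 1; rw [hβ]; ring
      have h2 : (β - 1 : ℝ) = -α := by rw [hβ]; ring
      simp only [h1, h2]; ring
    rw [hcongr, betaEval hp hβ0 ht, ← hG]
    have hΓ1 : (0:ℝ) < Real.Gamma (((n:ℝ)+1) * β) := Real.Gamma_pos_of_pos hp
    have hΓ2 : (0:ℝ) < Real.Gamma (((n:ℝ)+1) * β + β) := Real.Gamma_pos_of_pos (by positivity)
    have ht1 : t ^ α * t ^ (((n:ℝ)+1)*β + β - 1) = t ^ (((n:ℝ)+1) * β) := by
      rw [← Real.rpow_add ht]; congr 1; rw [hβ]; ring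
    have hcast : ((((n:ℕ)+1 :ℕ):ℝ) + 1) * β = ((n:ℝ)+1)*β + β := by push_cast; ring
    rw [hcoef]
    simp only [← hG, hcast]
    rw [← ht1]
    field_simp
    ring
  -- the master induction
  have hcoef0 : coef 0 = 1 := by
    rw [hcoef]
    simp only [pow_zero, one_mul, Nat.cast_zero, zero_add, one_mul]
    rw [← hG]
    exact div_self hG0.ne'
  have claim : ∀ N : ℕ, ∀ t, 0 ≤ t → t ≤ t₀ →
      x t ≤ a * (∑ n ∈ Finset.range N, coef n * t ^ ((n:ℝ) * β))
        + M * (coef N * t ^ ((N:ℝ) * β)) := by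
    intro N
    induction N with
    | zero =>
      intro t ht htt
      simp only [Finset.range_zero, Finset.sum_empty, mul_zero, zero_add, Nat.cast_zero,
        zero_mul, Real.rpow_zero, mul_one, hcoef0]
      exact hxM t ⟨ht, htt⟩
    | succ N ih =>
      intro t ht htt
      have hx0lea : x 0 ≤ a := by
        have := hineq 0 le_rfl
        simpa [Real.zero_rpow hα0.ne'] using this
      rcases eq_or_lt_of_le ht with h0 | hpos
      · -- t = 0
        rw [← h0]
        have hsum0 : (∑ n ∈ Finset.range (N+1), coef n * (0:ℝ) ^ ((n:ℝ) * β)) = 1 := by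
          rw [Finset.sum_range_succ' (fun n => coef n * (0:ℝ) ^ ((n:ℝ) * β)) N]
          have hz : ∀ j ∈ Finset.range N, coef (j+1) * (0:ℝ) ^ ((((j:ℕ)+1 :ℕ):ℝ) * β) = 0 := by
            intro j _
            rw [Real.zero_rpow (by positivity : ((((j:ℕ)+1 :ℕ):ℝ) * β) ≠ 0)]
            ring
          rw [Finset.sum_congr rfl hz]
          simp [hcoef0]
        rw [hsum0]
        have hlast : (0:ℝ) ^ ((((N:ℕ)+1 :ℕ):ℝ) * β) = 0 :=
          Real.zero_rpow (by positivity)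
        rw [hlast]
        simpa using hx0lea
      · -- t > 0
        have hIH : ∀ u ∈ Icc (0:ℝ) t, x u ≤ a * (∑ n ∈ Finset.range N, coef n * u ^ ((n:ℝ) * β))
            + M * (coef N * u ^ ((N:ℝ) * β)) := fun u hu => ih u hu.1 (hu.2.trans htt)
        have hβm1 : (β - 1 : ℝ) = -α := by rw [hβ]; ring
        have hKx : IntervalIntegrable (fun u => (t - u) ^ (-α) * u ^ (-α) * x u) volume 0 t := by
          have hbase := betaIntegrable (p := β) (q := β) hβ0 hβ0 hpos
          rw [intervalIntegrable_iff, uIoc_of_le hpos.le] at hbase ⊢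
          have hxmeas : AEStronglyMeasurable x (volume.restrict (Ioc 0 t)) :=
            (hcont.mono (fun u (hu : u ∈ Ioc 0 t) => le_of_lt hu.1)).aestronglyMeasurable
              measurableSet_Ioc
          have hbdd : ∀ᵐ u ∂(volume.restrict (Ioc 0 t)), ‖x u‖ ≤ M := by
            rw [ae_restrict_iff' measurableSet_Ioc]
            filter_upwards with u hu
            rw [Real.norm_eq_abs, abs_of_nonneg (hnonneg u hu.1.le)]
            exact hxM u ⟨hu.1.le, hu.2.trans htt⟩
          have := Integrable.bdd_mul (c := M) hbase hxmeas hbdd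
          apply this.congr (Eventually.of_forall fun u => ?_)
          simp only [hβm1]
          ring
        have hψint' := hψint t hpos
        have heq : ∀ u, ((∑ n ∈ Finset.range N,
              (a * coef n) * ((t - u) ^ (-α) * u ^ (-α) * u ^ ((n:ℝ) * β)))
            + (M * coef N) * ((t - u) ^ (-α) * u ^ (-α) * u ^ ((N:ℝ) * β)))
            = (t - u) ^ (-α) * u ^ (-α) *
              (a * (∑ n ∈ Finset.range N, coef n * u ^ ((n:ℝ) * β))
                + M * (coef N * u ^ ((N:ℝ) * β))) := by
          intro u
          simp only [Finset.mul_sum]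
          rw [mul_add]
          congr 1
          · rw [Finset.mul_sum]
            exact Finset.sum_congr rfl fun n _ => by ring
          · ring
        have hsumint : IntervalIntegrable (fun u => ∑ n ∈ Finset.range N,
            (a * coef n) * ((t - u) ^ (-α) * u ^ (-α) * u ^ ((n:ℝ) * β))) volume 0 t := by
          have hfn : (fun u : ℝ => ∑ n ∈ Finset.range N,
                (a * coef n) * ((t - u) ^ (-α) * u ^ (-α) * u ^ ((n:ℝ) * β)))
              = ∑ n ∈ Finset.range N, fun u : ℝ =>
                (a * coef n) * ((t - u) ^ (-α) * u ^ (-α) * u ^ ((n:ℝ) * β)) := by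
            funext u
            simp [Finset.sum_apply]
          rw [hfn]
          exact IntervalIntegrable.sum _ (fun n _ => (hψint' n).const_mul _)
        have hKφ : IntervalIntegrable (fun u => (t - u) ^ (-α) * u ^ (-α) *
            (a * (∑ n ∈ Finset.range N, coef n * u ^ ((n:ℝ) * β))
              + M * (coef N * u ^ ((N:ℝ) * β)))) volume 0 t := by
          have := hsumint.add ((hψint' N).const_mul (M * coef N))
          apply this.congr_ae (Eventually.of_forall fun u => ?_)
          exact (heq u)
        have hKnn : ∀ u ∈ Icc (0:ℝ) t, 0 ≤ (t - u) ^ (-α) * u ^ (-α) :=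
          fun u hu => mul_nonneg (Real.rpow_nonneg (by linarith [hu.2]) _)
            (Real.rpow_nonneg hu.1 _)
        have hmono := intervalIntegral.integral_mono_on hpos.le hKx hKφ (fun u hu => by
          exact mul_le_mul_of_nonneg_left (hIH u hu) (hKnn u hu))
        have hdecomp : (∫ u in (0:ℝ)..t, (t - u) ^ (-α) * u ^ (-α) *
              (a * (∑ n ∈ Finset.range N, coef n * u ^ ((n:ℝ) * β))
                + M * (coef N * u ^ ((N:ℝ) * β))))
            = (∑ n ∈ Finset.range N, (a * coef n) *
                ∫ u in (0:ℝ)..t, (t - u) ^ (-α) * u ^ (-α) * u ^ ((n:ℝ) * β))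
              + (M * coef N) * ∫ u in (0:ℝ)..t, (t - u) ^ (-α) * u ^ (-α) * u ^ ((N:ℝ) * β) := by
          rw [intervalIntegral.integral_congr (fun u _ => (heq u).symm)]
          rw [intervalIntegral.integral_add hsumint ((hψint' N).const_mul (M * coef N))]
          rw [intervalIntegral.integral_finset_sum (fun n _ => (hψint' n).const_mul (a * coef n))]
          congr 1
          · exact Finset.sum_congr rfl fun n _ =>
              intervalIntegral.integral_const_mul _ _
          · exact intervalIntegral.integral_const_mul _ _
        calc x t ≤ a + b * t ^ α * ∫ u in (0:ℝ)..t, (t - u) ^ (-α) * u ^ (-α) * x u :=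
              hineq t ht
          _ ≤ a + b * t ^ α * ∫ u in (0:ℝ)..t, (t - u) ^ (-α) * u ^ (-α) *
                (a * (∑ n ∈ Finset.range N, coef n * u ^ ((n:ℝ) * β))
                  + M * (coef N * u ^ ((N:ℝ) * β))) := by
              have hbt : (0:ℝ) ≤ b * t ^ α := by positivity
              nlinarith [mul_le_mul_of_nonneg_left hmono hbt]
          _ = a + ((∑ n ∈ Finset.range N, a * (coef (n+1) * t ^ (((n:ℝ)+1) * β)))
                + M * (coef (N+1) * t ^ (((N:ℝ)+1) * β))) := by
              rw [hdecomp, mul_add, Finset.mul_sum]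
              congr 2
              · apply Finset.sum_congr rfl
                intro n _
                linear_combination a * (hψval t hpos n)
              · linear_combination M * (hψval t hpos N)
          _ = a * (∑ n ∈ Finset.range (N+1), coef n * t ^ ((n:ℝ) * β))
              + M * (coef (N+1) * t ^ ((((N:ℕ)+1 :ℕ):ℝ) * β)) := by
              rw [Finset.sum_range_succ' (fun n => coef n * t ^ ((n:ℝ) * β)) N]
              have hc0 : coef 0 * t ^ (((0:ℕ):ℝ) * β) = 1 := by
                simp [hcoef0, Real.rpow_zero]
              push_cast
              rw [mul_add, Finset.mul_sum]
              simp only [Nat.cast_zero, zero_mul, Real.rpow_zero, hcoef0]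
              ring

  -- conclusion
  set w : ℝ := (b * G) ^ ((1:ℝ)/β) * t₀ with hw
  have hw0 : 0 ≤ w := by positivity
  have hterm_eq : ∀ n : ℕ, coef n * t₀ ^ ((n:ℝ) * β)
      = G * (w ^ ((n:ℝ) * β) / Real.Gamma (((n:ℝ)+1) * β)) := by
    intro n
    have h1 : w ^ ((n:ℝ) * β) = (b*G)^n * t₀ ^ ((n:ℝ) * β) := by
      rw [hw, Real.mul_rpow (by positivity) ht₀]
      congr 1
      rw [← Real.rpow_natCast (b*G) n, ← Real.rpow_mul (by positivity)]
      congr 1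
      field_simp
    rw [h1, hcoef]
    ring
  have hS : ∀ N, (∑ n ∈ Finset.range N, coef n * t₀ ^ ((n:ℝ) * β))
      ≤ G * (4 * Real.exp 2 / β * Real.exp (2 * w)) := by
    intro N
    calc ∑ n ∈ Finset.range N, coef n * t₀ ^ ((n:ℝ) * β)
        = G * ∑ n ∈ Finset.range N, w ^ ((n:ℝ) * β) / Real.Gamma (((n:ℝ)+1) * β) := by
          rw [Finset.mul_sum]
          exact Finset.sum_congr rfl fun n _ => hterm_eq n
      _ ≤ G * (4 * Real.exp 2 / β * Real.exp (2 * w)) :=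
          mul_le_mul_of_nonneg_left (series_bound hβ0 hβ1 hw0 N) hG0.le
  have hsummable : Summable (fun n : ℕ => w ^ ((n:ℝ) * β) / Real.Gamma (((n:ℝ)+1) * β)) := by
    apply summable_of_sum_range_le (c := 4 * Real.exp 2 / β * Real.exp (2*w))
    · intro n
      exact div_nonneg (Real.rpow_nonneg hw0 _)
        (Real.Gamma_pos_of_pos (by positivity)).le
    · intro N
      exact series_bound hβ0 hβ1 hw0 N
  have htail : Tendsto (fun N : ℕ => w ^ ((N:ℝ) * β) / Real.Gamma (((N:ℝ)+1) * β))
      atTop (nhds 0) := hsummable.tendsto_atTop_zero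
  have hxle : ∀ N : ℕ, x t₀ ≤ a * (G * (4 * Real.exp 2 / β * Real.exp (2 * w)))
      + (M * G) * (w ^ ((N:ℝ) * β) / Real.Gamma (((N:ℝ)+1) * β)) := by
    intro N
    have h := claim N t₀ ht₀ le_rfl
    have h2 : M * (coef N * t₀ ^ ((N:ℝ) * β))
        = (M * G) * (w ^ ((N:ℝ) * β) / Real.Gamma (((N:ℝ)+1) * β)) := by
      rw [hterm_eq N]; ring
    have h3 := mul_le_mul_of_nonneg_left (hS N) ha.le
    linarith
  have hlim : Tendsto (fun N : ℕ => a * (G * (4 * Real.exp 2 / β * Real.exp (2 * w)))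
      + (M * G) * (w ^ ((N:ℝ) * β) / Real.Gamma (((N:ℝ)+1) * β))) atTop
      (nhds (a * (G * (4 * Real.exp 2 / β * Real.exp (2 * w))))) := by
    have h4 := htail.const_mul (M * G)
    have h5 := (tendsto_const_nhds (x := a * (G * (4 * Real.exp 2 / β * Real.exp (2 * w))))
      (f := (atTop : Filter ℕ))).add h4
    simpa using h5
  have hfinal : x t₀ ≤ a * (G * (4 * Real.exp 2 / β * Real.exp (2 * w))) :=
    ge_of_tendsto hlim (Eventually.of_forall hxle)
  have harg : (2:ℝ) * w = 2 * G ^ ((1:ℝ)/β) * t₀ * b ^ ((1:ℝ)/β) := by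
    rw [hw, Real.mul_rpow hb.le hG0.le]
    ring
  calc x t₀ ≤ a * (G * (4 * Real.exp 2 / β * Real.exp (2 * w))) := hfinal
    _ = a * (4 * Real.exp 2 * G / β) * Real.exp (2 * G ^ ((1:ℝ)/β) * t₀ * b ^ ((1:ℝ)/β)) := by
        rw [← harg]
        ring
    _ = _ := by rw [hG, hβ]
end

section
/- Let 0 < α < 1 and T > 0. There exists a constant C = C(α,T) > 0 such that for every positive integer N with δ = T/N ≤ 1 and every s ∈ (0,T] that is not a grid point (i.e., s ≠ t_s), one has ∫_0^{t_s} (s−u)^{−α−1} ( ∫_u^{t_s} (v−t_v)^{−α} dv ) du ≤ C δ^{−α}. -/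
noncomputable def tgrid (δ u : ℝ) : ℝ := δ * (⌊u / δ⌋ : ℤ)

open MeasureTheory intervalIntegral Set

section aux
variable {α δ : ℝ}

lemma tgrid_le (hδ : 0 < δ) (u : ℝ) : tgrid δ u ≤ u := by
  have h := Int.floor_le (u / δ)
  have := mul_le_mul_of_nonneg_left h hδ.le
  unfold tgrid
  calc δ * (⌊u / δ⌋ : ℤ) ≤ δ * (u / δ) := this
    _ = u := by field_simp

lemma g_nonneg (hδ : 0 < δ) (v : ℝ) : 0 ≤ (v - tgrid δ v) ^ (-α) :=
  Real.rpow_nonneg (sub_nonneg.2 (tgrid_le hδ v)) _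

lemma rpow_shift_ii (hα1 : α < 1) (c a b : ℝ) :
    IntervalIntegrable (fun x => (x - c) ^ (-α)) volume a b := by
  have h := (intervalIntegral.intervalIntegrable_rpow'
      (a := a - c) (b := b - c) (r := -α) (by linarith)).comp_sub_right c
  simpa using h

lemma cell_congr_ae (hδ : 0 < δ) (j : ℤ) {a b : ℝ} (hja : (j : ℝ) * δ ≤ a) (hab : a ≤ b)
    (hbj : b ≤ ((j : ℝ) + 1) * δ) :
    ∀ᵐ x : ℝ, x ∈ Set.uIoc a b → (x - tgrid δ x) ^ (-α) = (x - (j : ℝ) * δ) ^ (-α) := by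
  have hb : ∀ᵐ x : ℝ, x ≠ b := by
    have : (volume : Measure ℝ) {b} = 0 := measure_singleton b
    exact MeasureTheory.ae_iff.2 (by simpa using this)
  filter_upwards [hb] with x hxb hmem
  rw [Set.uIoc_of_le hab] at hmem
  have hxa : a < x := hmem.1
  have hxlt : x < ((j : ℝ) + 1) * δ := lt_of_le_of_ne (hmem.2.trans hbj)
    (fun h => hxb (le_antisymm hmem.2 (by nlinarith)))
  have hfl : ⌊x / δ⌋ = j := by
    rw [Int.floor_eq_iff]
    constructor
    · rw [le_div_iff₀ hδ]; nlinarith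
    · rw [div_lt_iff₀ hδ]; push_cast; nlinarith
  unfold tgrid
  rw [hfl, mul_comm]

lemma cell_integrable (hδ : 0 < δ) (hα1 : α < 1) (j : ℤ) {a b : ℝ} (hja : (j : ℝ) * δ ≤ a)
    (hab : a ≤ b) (hbj : b ≤ ((j : ℝ) + 1) * δ) :
    IntervalIntegrable (fun v => (v - tgrid δ v) ^ (-α)) volume a b := by
  have h2 := rpow_shift_ii (α := α) hα1 ((j : ℝ) * δ) a b
  rw [intervalIntegrable_iff_integrableOn_Ioc_of_le hab] at h2 ⊢
  refine h2.congr ?_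
  have h := cell_congr_ae (α := α) hδ j hja hab hbj
  rw [Set.uIoc_of_le hab] at h
  exact (MeasureTheory.ae_restrict_iff' measurableSet_Ioc).2
    (h.mono fun x hx hx2 => (hx hx2).symm)

lemma cell_integral_eq (hδ : 0 < δ) (j : ℤ) {a b : ℝ} (hja : (j : ℝ) * δ ≤ a) (hab : a ≤ b)
    (hbj : b ≤ ((j : ℝ) + 1) * δ) :
    ∫ v in a..b, (v - tgrid δ v) ^ (-α) = ∫ v in a..b, (v - (j : ℝ) * δ) ^ (-α) :=
  intervalIntegral.integral_congr_ae (cell_congr_ae hδ j hja hab hbj)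

lemma cell_value (hδ : 0 < δ) (hα0 : 0 < α) (hα1 : α < 1) (j : ℤ) :
    ∫ v in ((j : ℝ) * δ)..(((j : ℝ) + 1) * δ), (v - tgrid δ v) ^ (-α)
      = δ ^ (1 - α) / (1 - α) := by
  rw [cell_integral_eq hδ j le_rfl (by nlinarith) le_rfl]
  have h := intervalIntegral.integral_comp_sub_right (a := (j : ℝ) * δ)
    (b := ((j : ℝ) + 1) * δ) (fun x => x ^ (-α)) ((j : ℝ) * δ)
  rw [h]
  have h0 : (j : ℝ) * δ - (j : ℝ) * δ = 0 := by ring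
  have h1 : ((j : ℝ) + 1) * δ - (j : ℝ) * δ = δ := by ring
  rw [h0, h1, integral_rpow (Or.inl (by linarith))]
  rw [Real.zero_rpow (by linarith : -α + 1 ≠ 0), sub_zero]
  ring_nf

lemma grid_value (hδ : 0 < δ) (hα0 : 0 < α) (hα1 : α < 1) (n : ℕ) :
    IntervalIntegrable (fun v => (v - tgrid δ v) ^ (-α)) volume 0 ((n : ℝ) * δ) ∧
      ∫ v in (0 : ℝ)..((n : ℝ) * δ), (v - tgrid δ v) ^ (-α)
        = (n : ℝ) * (δ ^ (1 - α) / (1 - α)) := by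
  induction n with
  | zero => simp [IntervalIntegrable.refl]
  | succ n ih =>
    have hcast : ((n + 1 : ℕ) : ℝ) * δ = ((n : ℝ) + 1) * δ := by push_cast; ring
    have hcell : IntervalIntegrable (fun v => (v - tgrid δ v) ^ (-α)) volume
        ((n : ℝ) * δ) (((n : ℝ) + 1) * δ) :=
      cell_integrable hδ hα1 (n : ℤ) (by push_cast; exact le_rfl) (by nlinarith)
        (by push_cast; exact le_rfl)
    constructor
    · rw [hcast]; exact ih.1.trans hcell
    · rw [hcast, ← intervalIntegral.integral_add_adjacent_intervals ih.1 hcell, ih.2]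
      have := cell_value (α := α) hδ hα0 hα1 (n : ℤ)
      push_cast at this
      rw [this]
      push_cast
      ring



lemma innerB (hδ : 0 < δ) (hα0 : 0 < α) (hα1 : α < 1) (n : ℕ) {u : ℝ} (hu0 : 0 ≤ u)
    (hun : u ≤ (n : ℝ) * δ) :
    ∫ v in u..((n : ℝ) * δ), (v - tgrid δ v) ^ (-α)
      ≤ ((n : ℝ) * δ - u + δ) * δ ^ (-α) / (1 - α) := by
  set k : ℕ := (⌊u / δ⌋).toNat with hk
  have hfl0 : (0 : ℤ) ≤ ⌊u / δ⌋ := Int.floor_nonneg.2 (by positivity)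
  have hkc' : (k : ℝ) = ((⌊u / δ⌋ : ℤ) : ℝ) := by
    rw [hk]; exact_mod_cast congrArg (fun z : ℤ => (z : ℝ)) (Int.toNat_of_nonneg hfl0)
  have hku : (k : ℝ) * δ ≤ u := by
    rw [hkc']
    have h := Int.floor_le (u / δ)
    calc ((⌊u / δ⌋ : ℤ) : ℝ) * δ ≤ (u / δ) * δ := by nlinarith
      _ = u := by field_simp
  have huk : u < ((k : ℝ) + 1) * δ := by
    rw [hkc']
    have h := Int.lt_floor_add_one (u / δ)
    calc u = (u / δ) * δ := by field_simp
      _ < (((⌊u / δ⌋ : ℤ) : ℝ) + 1) * δ := by nlinarith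
  have hkn : (k : ℝ) * δ ≤ (n : ℝ) * δ := hku.trans hun
  have hk0 : (0 : ℝ) ≤ (k : ℝ) * δ := by positivity
  obtain ⟨Hn1, Hn2⟩ := grid_value (α := α) hδ hα0 hα1 n
  obtain ⟨Hk1, Hk2⟩ := grid_value (α := α) hδ hα0 hα1 k
  have hsub : ∀ {x y : ℝ}, 0 ≤ x → x ≤ y → y ≤ (n : ℝ) * δ →
      IntervalIntegrable (fun v => (v - tgrid δ v) ^ (-α)) volume x y := by
    intro x y hx hxy hy
    refine Hn1.mono_set ?_
    rw [Set.uIcc_of_le hxy, Set.uIcc_of_le (by positivity)]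
    exact Set.Icc_subset_Icc hx hy
  have hIkn := hsub hk0 hkn le_rfl
  have hIku := hsub hk0 hku hun
  have hIun := hsub hu0 hun le_rfl
  have hadd := intervalIntegral.integral_add_adjacent_intervals Hk1 hIkn
  have hval : ∫ v in ((k : ℝ) * δ)..((n : ℝ) * δ), (v - tgrid δ v) ^ (-α)
      = ((n : ℝ) - (k : ℝ)) * (δ ^ (1 - α) / (1 - α)) := by
    rw [Hk2] at hadd
    rw [Hn2] at hadd
    linarith
  have hadd2 := intervalIntegral.integral_add_adjacent_intervals hIku hIun
  have hpos : 0 ≤ ∫ v in ((k : ℝ) * δ)..u, (v - tgrid δ v) ^ (-α) :=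
    intervalIntegral.integral_nonneg hku (fun x _ => g_nonneg hδ x)
  have hmono : (∫ v in u..((n : ℝ) * δ), (v - tgrid δ v) ^ (-α))
      ≤ ((n : ℝ) - (k : ℝ)) * (δ ^ (1 - α) / (1 - α)) := by
    rw [← hval]; linarith
  have hδα : (0 : ℝ) < δ ^ (-α) := Real.rpow_pos_of_pos hδ _
  have hδsplit : δ ^ (1 - α) = δ * δ ^ (-α) := by
    rw [show (1 - α) = 1 + (-α) by ring, Real.rpow_add hδ, Real.rpow_one]
  have h1α : (0 : ℝ) < 1 - α := by linarith
  refine hmono.trans ?_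
  rw [hδsplit]
  rw [show ((n : ℝ) - (k : ℝ)) * (δ * δ ^ (-α) / (1 - α))
      = (((n : ℝ) - (k : ℝ)) * δ) * δ ^ (-α) / (1 - α) by ring]
  have h2 : ((n : ℝ) - (k : ℝ)) * δ ≤ (n : ℝ) * δ - u + δ := by nlinarith
  have h3 := mul_le_mul_of_nonneg_right h2 hδα.le
  exact div_le_div_of_nonneg_right h3 h1α.le


lemma innerC (hδ : 0 < δ) (hα0 : 0 < α) (hα1 : α < 1) (n : ℕ) {u : ℝ}
    (hu1 : ((n : ℝ) - 1) * δ < u) (hun : u ≤ (n : ℝ) * δ) :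
    ∫ v in u..((n : ℝ) * δ), (v - tgrid δ v) ^ (-α)
      ≤ ((n : ℝ) * δ - u) * (u - ((n : ℝ) - 1) * δ) ^ (-α) := by
  have hcast : (((n : ℤ) - 1 : ℤ) : ℝ) = (n : ℝ) - 1 := by push_cast; ring
  have heq := cell_integral_eq (α := α) hδ ((n : ℤ) - 1)
    (a := u) (b := (n : ℝ) * δ) (by rw [hcast]; exact hu1.le) hun
    (by rw [hcast]; ring_nf; exact le_rfl)
  rw [heq, hcast]
  have hmono := intervalIntegral.integral_mono_on (μ := volume) hun
    (rpow_shift_ii hα1 (((n : ℝ) - 1) * δ) u ((n : ℝ) * δ))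
    (_root_.intervalIntegrable_const (c := (u - ((n : ℝ) - 1) * δ) ^ (-α)))
    (fun x hx => Real.rpow_le_rpow_of_nonpos (by linarith [hx.1])
      (by linarith [hx.1]) (by linarith))
  refine hmono.trans ?_
  rw [intervalIntegral.integral_const, smul_eq_mul]

set_option maxHeartbeats 1000000 in
/-- Lemma 1: for `0 < α < 1` there is `C = C(α,T)` such that for every partition with
mesh `δ = T/N ≤ 1` and every non-grid point `s ∈ (0,T]`,
`∫_0^{t_s} (s−u)^{−α−1} ∫_u^{t_s} (v−t_v)^{−α} dv du ≤ C δ^{−α}`. -/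
theorem stmt_1 (α T : ℝ) (hα0 : 0 < α) (hα1 : α < 1) (hT : 0 < T) :
    ∃ C : ℝ, 0 < C ∧ ∀ N : ℕ, 0 < N → T / N ≤ 1 →
      ∀ s ∈ Set.Ioc (0:ℝ) T, s ≠ tgrid (T / N) s →
        (∫ u in (0:ℝ)..tgrid (T / N) s,
            (s - u) ^ (-α - 1) * ∫ v in u..tgrid (T / N) s, (v - tgrid (T / N) v) ^ (-α))
          ≤ C * (T / N) ^ (-α) := by
  have h1α : (0 : ℝ) < 1 - α := by linarith
  refine ⟨(T ^ (1 - α) / (1 - α) + 1 / α) / (1 - α) + 2 / (1 - α) + 4 / (1 - α) + 1,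
    by positivity, ?_⟩
  intro N hN hδ1 s hs hsne
  set δ : ℝ := T / N with hδdef
  have hδ : 0 < δ := div_pos hT (by exact_mod_cast hN)
  have hδα : (0 : ℝ) < δ ^ (-α) := Real.rpow_pos_of_pos hδ _
  have hs0 : 0 < s := hs.1
  have hsT : s ≤ T := hs.2
  set n : ℕ := (⌊s / δ⌋).toNat with hn
  have hfl0 : (0 : ℤ) ≤ ⌊s / δ⌋ := Int.floor_nonneg.2 (by positivity)
  have hnc : (n : ℝ) = ((⌊s / δ⌋ : ℤ) : ℝ) := by
    rw [hn]; exact_mod_cast congrArg (fun z : ℤ => (z : ℝ)) (Int.toNat_of_nonneg hfl0)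
  have hts : tgrid δ s = (n : ℝ) * δ := by
    unfold tgrid; rw [← hnc]; ring
  set b : ℝ := (n : ℝ) * δ with hbdef
  rw [hts]
  have hbs : b ≤ s := hts ▸ tgrid_le hδ s
  have hbs' : b < s := lt_of_le_of_ne hbs (fun h => hsne ((h ▸ hts).symm))
  have hsb2 : s < b + δ := by
    have h := Int.lt_floor_add_one (s / δ)
    have : s / δ * δ < (((⌊s / δ⌋ : ℤ) : ℝ) + 1) * δ := by nlinarith
    rw [hbdef, hnc]
    calc s = s / δ * δ := by field_simp
      _ < (((⌊s / δ⌋ : ℤ) : ℝ) + 1) * δ := this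
      _ = ((⌊s / δ⌋ : ℤ) : ℝ) * δ + δ := by ring
  by_cases hn0 : n = 0
  · rw [hbdef, hn0]
    simp only [Nat.cast_zero, zero_mul, intervalIntegral.integral_same]
    positivity
  have hn1 : 1 ≤ n := Nat.one_le_iff_ne_zero.2 hn0
  have hn1' : (1 : ℝ) ≤ (n : ℝ) := by exact_mod_cast hn1
  have hδb : δ ≤ b := by rw [hbdef]; nlinarith
  have h0b : (0 : ℝ) ≤ b := by positivity
  set g : ℝ → ℝ := fun v => (v - tgrid δ v) ^ (-α) with hgdef
  set f : ℝ → ℝ := fun u => (s - u) ^ (-α - 1) * ∫ v in u..b, g v with hfdef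
  have hg1 : IntervalIntegrable g volume 0 b := (grid_value hδ hα0 hα1 n).1
  -- continuity of f on [0, b]
  have hcont : ContinuousOn f (Icc 0 b) := by
    have c1 : ContinuousOn (fun u : ℝ => (s - u) ^ (-α - 1)) (Icc 0 b) := by
      apply ContinuousOn.rpow_const ((continuous_const.sub continuous_id).continuousOn)
      intro x hx
      exact Or.inl (ne_of_gt (by simp only [Pi.sub_apply, id_eq]; linarith [hx.2]))
    have c2 : ContinuousOn (fun u : ℝ => ∫ v in u..b, g v) (Icc 0 b) := by
      have hio : IntegrableOn g (uIcc 0 b) volume := by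
        rw [uIcc_of_le h0b, integrableOn_Icc_iff_integrableOn_Ioc]
        exact (intervalIntegrable_iff_integrableOn_Ioc_of_le h0b).1 hg1
      have := intervalIntegral.continuousOn_primitive_interval_left (f := g)
        (μ := volume) (a := 0) (b := b) hio
      rwa [uIcc_of_le h0b] at this
    exact c1.mul c2
  have hfint : ∀ {x y : ℝ}, 0 ≤ x → x ≤ y → y ≤ b → IntervalIntegrable f volume x y := by
    intro x y hx hxy hy
    apply (hcont.mono ?_).intervalIntegrable
    rw [uIcc_of_le hxy]
    exact Icc_subset_Icc hx hy
  have hInn_nonneg : ∀ u : ℝ, u ≤ b → 0 ≤ ∫ v in u..b, g v := fun u hu =>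
    intervalIntegral.integral_nonneg hu (fun x _ => g_nonneg hδ x)
  have hbb : b - δ ≤ b - δ / 2 := by linarith
  have hbb2 : b - δ / 2 ≤ b := by linarith
  have h0bδ : (0 : ℝ) ≤ b - δ := by linarith
  -- splitting
  have hsplit : (∫ u in (0:ℝ)..b, f u)
      = (∫ u in (0:ℝ)..(b - δ), f u) + (∫ u in (b - δ)..(b - δ/2), f u)
        + (∫ u in (b - δ/2)..b, f u) := by
    rw [intervalIntegral.integral_add_adjacent_intervals
        (hfint le_rfl h0bδ (by linarith))
        (hfint h0bδ hbb hbb2)]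
    rw [intervalIntegral.integral_add_adjacent_intervals
        (hfint le_rfl (by linarith) hbb2)
        (hfint (by linarith) hbb2 le_rfl)]
  -- Piece 1
  have hP1 : (∫ u in (0:ℝ)..(b - δ), f u)
      ≤ (T ^ (1 - α) / (1 - α) + 1 / α) / (1 - α) * δ ^ (-α) := by
    set φ : ℝ → ℝ := fun u => ((s - u) ^ (-α) + δ * (s - u) ^ (-α - 1)) * (δ ^ (-α) / (1 - α))
      with hφdef
    have hsu : ∀ u : ℝ, u ≤ b - δ → 0 < s - u := fun u hu => by linarith
    have hφint : IntervalIntegrable φ volume 0 (b - δ) := by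
      apply ContinuousOn.intervalIntegrable
      rw [uIcc_of_le h0bδ]
      apply ContinuousOn.mul ?_ continuousOn_const
      apply ContinuousOn.add
      · apply ContinuousOn.rpow_const ((continuous_const.sub continuous_id).continuousOn)
        intro x hx
        exact Or.inl (ne_of_gt (by simp only [Pi.sub_apply, id_eq]; linarith [hsu x hx.2]))
      · apply ContinuousOn.mul continuousOn_const
        apply ContinuousOn.rpow_const ((continuous_const.sub continuous_id).continuousOn)
        intro x hx
        exact Or.inl (ne_of_gt (by simp only [Pi.sub_apply, id_eq]; linarith [hsu x hx.2]))
    have hmono : (∫ u in (0:ℝ)..(b - δ), f u) ≤ ∫ u in (0:ℝ)..(b - δ), φ u := by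
      apply intervalIntegral.integral_mono_on h0bδ (hfint le_rfl h0bδ (by linarith)) hφint
      intro u hu
      have hsu' : 0 < s - u := hsu u hu.2
      have hp : (0 : ℝ) ≤ (s - u) ^ (-α - 1) := Real.rpow_nonneg hsu'.le _
      have hInner := innerB (α := α) hδ hα0 hα1 n hu.1 (by linarith [hu.2] : u ≤ (n:ℝ) * δ)
      have step1 : f u ≤ (s - u) ^ (-α - 1) * ((b - u + δ) * δ ^ (-α) / (1 - α)) := by
        rw [hfdef]
        exact mul_le_mul_of_nonneg_left hInner hp
      refine step1.trans ?_
      have hxeq : (s - u) ^ (-α) = (s - u) ^ (-α - 1) * (s - u) := by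
        rw [← Real.rpow_add_one (ne_of_gt hsu')]
        norm_num
      have key : (s - u) ^ (-α - 1) * (b - u + δ) ≤ (s - u) ^ (-α) + δ * (s - u) ^ (-α - 1) := by
        rw [hxeq]
        nlinarith [mul_le_mul_of_nonneg_left (by linarith [hbs'.le] : b - u + δ ≤ (s - u) + δ) hp]
      rw [hφdef]
      have hc : (0 : ℝ) ≤ δ ^ (-α) / (1 - α) := by positivity
      calc (s - u) ^ (-α - 1) * ((b - u + δ) * δ ^ (-α) / (1 - α))
          = ((s - u) ^ (-α - 1) * (b - u + δ)) * (δ ^ (-α) / (1 - α)) := by ring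
        _ ≤ ((s - u) ^ (-α) + δ * (s - u) ^ (-α - 1)) * (δ ^ (-α) / (1 - α)) :=
            mul_le_mul_of_nonneg_right key hc
    refine hmono.trans ?_
    -- compute the φ integral
    have hI1 : (∫ u in (0:ℝ)..(b - δ), (s - u) ^ (-α))
        = (s ^ (-α + 1) - (s - (b - δ)) ^ (-α + 1)) / (-α + 1) := by
      have h := intervalIntegral.integral_comp_sub_left (a := (0:ℝ)) (b := b - δ)
        (fun x : ℝ => x ^ (-α)) s
      rw [h, sub_zero, integral_rpow (Or.inl (by linarith))]
    have hI2 : (∫ u in (0:ℝ)..(b - δ), (s - u) ^ (-α - 1))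
        = (s ^ (-α) - (s - (b - δ)) ^ (-α)) / (-α) := by
      have h := intervalIntegral.integral_comp_sub_left (a := (0:ℝ)) (b := b - δ)
        (fun x : ℝ => x ^ (-α - 1)) s
      rw [h, sub_zero, integral_rpow (Or.inr ⟨by intro hc; simp at hc; linarith, ?_⟩)]
      · norm_num
      · rw [uIcc_of_le (by linarith : s - (b - δ) ≤ s)]
        intro hc
        have := hc.1
        linarith
    have hint1 : IntervalIntegrable (fun u : ℝ => (s - u) ^ (-α)) volume 0 (b - δ) := by
      apply ContinuousOn.intervalIntegrable
      rw [uIcc_of_le h0bδ]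
      apply ContinuousOn.rpow_const ((continuous_const.sub continuous_id).continuousOn)
      intro x hx
      exact Or.inl (ne_of_gt (by simp only [Pi.sub_apply, id_eq]; linarith [hsu x hx.2]))
    have hint2 : IntervalIntegrable (fun u : ℝ => δ * (s - u) ^ (-α - 1)) volume 0 (b - δ) := by
      apply ContinuousOn.intervalIntegrable
      rw [uIcc_of_le h0bδ]
      apply ContinuousOn.mul continuousOn_const
      apply ContinuousOn.rpow_const ((continuous_const.sub continuous_id).continuousOn)
      intro x hx
      exact Or.inl (ne_of_gt (by simp only [Pi.sub_apply, id_eq]; linarith [hsu x hx.2]))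
    have hφval : (∫ u in (0:ℝ)..(b - δ), φ u)
        = ((∫ u in (0:ℝ)..(b - δ), (s - u) ^ (-α))
            + δ * (∫ u in (0:ℝ)..(b - δ), (s - u) ^ (-α - 1))) * (δ ^ (-α) / (1 - α)) := by
      rw [hφdef]
      rw [intervalIntegral.integral_mul_const]
      rw [intervalIntegral.integral_add hint1 hint2]
      rw [intervalIntegral.integral_const_mul]
    rw [hφval, hI1, hI2]
    -- now pure inequalities
    have hA : (s ^ (-α + 1) - (s - (b - δ)) ^ (-α + 1)) / (-α + 1) ≤ T ^ (1 - α) / (1 - α) := by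
      rw [show (-α + 1) = 1 - α by ring]
      have h1 : s ^ (1 - α) ≤ T ^ (1 - α) := Real.rpow_le_rpow hs0.le hsT h1α.le
      have h2 : (0:ℝ) ≤ (s - (b - δ)) ^ (1 - α) := Real.rpow_nonneg (by linarith) _
      apply div_le_div_of_nonneg_right (by linarith) (by linarith)
    have hB : δ * ((s ^ (-α) - (s - (b - δ)) ^ (-α)) / (-α)) ≤ 1 / α := by
      have hd : δ ≤ s - (b - δ) := by linarith
      have h3 : (s - (b - δ)) ^ (-α) ≤ δ ^ (-α) :=
        Real.rpow_le_rpow_of_nonpos hδ hd (by linarith)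
      have h4 : (0:ℝ) ≤ s ^ (-α) := Real.rpow_nonneg hs0.le _
      have h5 : δ * δ ^ (-α) ≤ 1 := by
        have : δ * δ ^ (-α) = δ ^ (1 - α) := by
          rw [show (1 - α) = 1 + (-α) by ring, Real.rpow_add hδ, Real.rpow_one]
        rw [this]
        exact Real.rpow_le_one hδ.le hδ1 (by linarith)
      have heq : δ * ((s ^ (-α) - (s - (b - δ)) ^ (-α)) / (-α))
          = (δ * ((s - (b - δ)) ^ (-α) - s ^ (-α))) / α := by
        rw [div_neg]
        ring
      rw [heq]
      have hnum : δ * ((s - (b - δ)) ^ (-α) - s ^ (-α)) ≤ 1 := by nlinarith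
      calc (δ * ((s - (b - δ)) ^ (-α) - s ^ (-α))) / α ≤ 1 / α :=
            div_le_div_of_nonneg_right hnum hα0.le
        _ = 1 / α := rfl
    refine le_trans (mul_le_mul_of_nonneg_right (add_le_add hA hB)
      (by positivity : (0:ℝ) ≤ δ ^ (-α) / (1 - α))) (le_of_eq (by ring))
  -- Piece 2
  have hbd : ((n : ℝ) - 1) * δ = b - δ := by rw [hbdef]; ring
  have hxeq' : ∀ u : ℝ, u < s → (s - u) ^ (-α) = (s - u) ^ (-α - 1) * (s - u) := by
    intro u hu
    rw [← Real.rpow_add_one (sub_ne_zero.2 (ne_of_gt hu))]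
    norm_num
  have hhalf : (0:ℝ) < δ / 2 := by linarith
  have h2a : (δ / 2) ^ (-α) ≤ 2 * δ ^ (-α) := by
    have e2 : ((2:ℝ)⁻¹) ^ (-α) = (2:ℝ) ^ α := by
      rw [Real.inv_rpow (by norm_num : (0:ℝ) ≤ 2), Real.rpow_neg (by norm_num : (0:ℝ) ≤ 2),
        inv_inv]
    have e1 : (δ / 2) ^ (-α) = δ ^ (-α) * (2:ℝ) ^ α := by
      rw [div_eq_mul_inv, Real.mul_rpow hδ.le (by norm_num), e2]
    have e3 : (2:ℝ) ^ α ≤ 2 := by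
      calc (2:ℝ) ^ α ≤ (2:ℝ) ^ (1:ℝ) := Real.rpow_le_rpow_of_exponent_le one_le_two hα1.le
        _ = 2 := Real.rpow_one 2
    rw [e1]
    nlinarith [hδα.le]
  have h2b : (δ / 2) ^ (1 - α) ≤ 1 := Real.rpow_le_one hhalf.le (by linarith) (by linarith)
  have hptw : ∀ u : ℝ, b - δ < u → u ≤ b →
      f u ≤ (s - u) ^ (-α) * (u - (b - δ)) ^ (-α) := by
    intro u hul huu
    have hsu : 0 < s - u := by linarith
    have hp : (0:ℝ) ≤ (s - u) ^ (-α - 1) := Real.rpow_nonneg hsu.le _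
    have hq : (0:ℝ) ≤ (u - (b - δ)) ^ (-α) := Real.rpow_nonneg (by linarith) _
    have hInner := innerC (α := α) hδ hα0 hα1 n
      (by rw [hbd]; exact hul) (by rw [← hbdef]; exact huu)
    rw [← hbdef] at hInner
    rw [hbd] at hInner
    have step1 : f u ≤ (s - u) ^ (-α - 1) * ((b - u) * (u - (b - δ)) ^ (-α)) := by
      rw [hfdef]
      exact mul_le_mul_of_nonneg_left hInner hp
    refine step1.trans ?_
    rw [hxeq' u (by linarith)]
    have h6 : (s - u) ^ (-α - 1) * (b - u) ≤ (s - u) ^ (-α - 1) * (s - u) :=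
      mul_le_mul_of_nonneg_left (by linarith) hp
    calc (s - u) ^ (-α - 1) * ((b - u) * (u - (b - δ)) ^ (-α))
        = ((s - u) ^ (-α - 1) * (b - u)) * (u - (b - δ)) ^ (-α) := by ring
      _ ≤ ((s - u) ^ (-α - 1) * (s - u)) * (u - (b - δ)) ^ (-α) :=
          mul_le_mul_of_nonneg_right h6 hq
  have hP2 : (∫ u in (b - δ)..(b - δ/2), f u) ≤ 2 / (1 - α) * δ ^ (-α) := by
    set φ : ℝ → ℝ := fun u => (δ / 2) ^ (-α) * (u - (b - δ)) ^ (-α) with hφdef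
    have hφint : IntervalIntegrable φ volume (b - δ) (b - δ/2) :=
      (rpow_shift_ii hα1 (b - δ) (b - δ) (b - δ/2)).const_mul _
    have hae : f ≤ᵐ[volume.restrict (Icc (b - δ) (b - δ/2))] φ := by
      have hne : ∀ᵐ u : ℝ ∂volume, u ≠ b - δ :=
        MeasureTheory.ae_iff.2 (by simpa using measure_singleton (b - δ))
      have h1 := MeasureTheory.ae_restrict_of_ae
        (μ := volume) (s := Icc (b - δ) (b - δ/2)) hne
      have h2 := MeasureTheory.ae_restrict_mem (μ := volume)
        (measurableSet_Icc : MeasurableSet (Icc (b - δ) (b - δ/2)))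
      filter_upwards [h1, h2] with u hu1 hu2
      have hul : b - δ < u := lt_of_le_of_ne hu2.1 (Ne.symm hu1)
      have huu : u ≤ b - δ / 2 := hu2.2
      refine (hptw u hul (by linarith)).trans ?_
      have hq : (0:ℝ) ≤ (u - (b - δ)) ^ (-α) := Real.rpow_nonneg (by linarith) _
      have h7 : (s - u) ^ (-α) ≤ (δ / 2) ^ (-α) :=
        Real.rpow_le_rpow_of_nonpos hhalf (by linarith) (by linarith)
      exact mul_le_mul_of_nonneg_right h7 hq
    have hmono := intervalIntegral.integral_mono_ae_restrict (μ := volume) hbb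
      (hfint h0bδ hbb hbb2) hφint hae
    refine hmono.trans ?_
    have hIφ : (∫ u in (b - δ)..(b - δ/2), (u - (b - δ)) ^ (-α))
        = (δ / 2) ^ (-α + 1) / (-α + 1) := by
      have h := intervalIntegral.integral_comp_sub_right (a := b - δ) (b := b - δ/2)
        (fun x : ℝ => x ^ (-α)) (b - δ)
      rw [h, show b - δ - (b - δ) = (0:ℝ) by ring, show b - δ/2 - (b - δ) = δ/2 by ring,
        integral_rpow (Or.inl (by linarith)), Real.zero_rpow (by linarith : -α + 1 ≠ 0),
        sub_zero]
    rw [hφdef]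
    rw [intervalIntegral.integral_const_mul, hIφ, show (-α + 1) = 1 - α by ring]
    calc (δ / 2) ^ (-α) * ((δ / 2) ^ (1 - α) / (1 - α))
        ≤ (2 * δ ^ (-α)) * (1 / (1 - α)) := by
          apply mul_le_mul h2a ?_ ?_ (by positivity)
          · exact div_le_div_of_nonneg_right h2b h1α.le
          · exact div_nonneg (Real.rpow_nonneg hhalf.le _) h1α.le
      _ = 2 / (1 - α) * δ ^ (-α) := by ring
  -- Piece 3
  have hP3 : (∫ u in (b - δ/2)..b, f u) ≤ 4 / (1 - α) * δ ^ (-α) := by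
    set φ : ℝ → ℝ := fun u => (δ / 2) ^ (-α) * (s - u) ^ (-α) with hφdef
    have hφint : IntervalIntegrable φ volume (b - δ/2) b := by
      apply ContinuousOn.intervalIntegrable
      rw [uIcc_of_le hbb2]
      apply ContinuousOn.mul continuousOn_const
      apply ContinuousOn.rpow_const ((continuous_const.sub continuous_id).continuousOn)
      intro x hx
      exact Or.inl (ne_of_gt (by simp only [Pi.sub_apply, id_eq]; linarith [hx.2]))
    have hmono := intervalIntegral.integral_mono_on hbb2
      (hfint (by linarith) hbb2 le_rfl) hφint ?_
    swap
    · intro u hu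
      have hul : b - δ < u := by linarith [hu.1]
      refine (hptw u hul hu.2).trans ?_
      have hq : (0:ℝ) ≤ (s - u) ^ (-α) := Real.rpow_nonneg (by linarith [hu.2]) _
      have h7 : (u - (b - δ)) ^ (-α) ≤ (δ / 2) ^ (-α) :=
        Real.rpow_le_rpow_of_nonpos hhalf (by linarith [hu.1]) (by linarith)
      rw [hφdef]
      calc (s - u) ^ (-α) * (u - (b - δ)) ^ (-α)
          ≤ (s - u) ^ (-α) * (δ / 2) ^ (-α) := mul_le_mul_of_nonneg_left h7 hq
        _ = (δ / 2) ^ (-α) * (s - u) ^ (-α) := by ring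
    refine hmono.trans ?_
    have hIφ : (∫ u in (b - δ/2)..b, (s - u) ^ (-α))
        = ((s - (b - δ/2)) ^ (-α + 1) - (s - b) ^ (-α + 1)) / (-α + 1) := by
      have h := intervalIntegral.integral_comp_sub_left (a := b - δ/2) (b := b)
        (fun x : ℝ => x ^ (-α)) s
      rw [h, integral_rpow (Or.inl (by linarith))]
    rw [hφdef]
    rw [intervalIntegral.integral_const_mul, hIφ, show (-α + 1) = 1 - α by ring]
    have h8 : (s - (b - δ/2)) ^ (1 - α) ≤ 2 := by
      calc (s - (b - δ/2)) ^ (1 - α) ≤ (2 * δ) ^ (1 - α) :=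
            Real.rpow_le_rpow (by linarith) (by linarith) (by linarith)
        _ = 2 ^ (1 - α) * δ ^ (1 - α) := Real.mul_rpow (by norm_num) hδ.le
        _ ≤ 2 * 1 := by
            apply mul_le_mul ?_ (Real.rpow_le_one hδ.le hδ1 (by linarith))
              (Real.rpow_nonneg hδ.le _) (by norm_num)
            calc (2:ℝ) ^ (1 - α : ℝ) ≤ (2:ℝ) ^ (1:ℝ) :=
                  Real.rpow_le_rpow_of_exponent_le one_le_two (by linarith)
              _ = 2 := Real.rpow_one 2
        _ = 2 := by norm_num
    have h9 : (0:ℝ) ≤ (s - b) ^ (1 - α) := Real.rpow_nonneg (by linarith) _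
    have h10 : (s - b) ^ (1 - α) ≤ (s - (b - δ/2)) ^ (1 - α) :=
      Real.rpow_le_rpow (by linarith) (by linarith) h1α.le
    calc (δ / 2) ^ (-α) * (((s - (b - δ/2)) ^ (1 - α) - (s - b) ^ (1 - α)) / (1 - α))
        ≤ (2 * δ ^ (-α)) * (2 / (1 - α)) := by
          apply mul_le_mul h2a ?_ ?_ (by positivity)
          · apply div_le_div_of_nonneg_right (by linarith) h1α.le
          · apply div_nonneg (by linarith) h1α.le
      _ = 4 / (1 - α) * δ ^ (-α) := by ring
  rw [hsplit]
  have hfinal : (0:ℝ) ≤ δ ^ (-α) := hδα.le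
  nlinarith [hP1, hP2, hP3]
end aux
end

section
/- (Pathwise form of Theorem 1(ii).) Fix T > 0, integers d,m ≥ 1, λ ∈ (1/2,1), K > 0, M > 0, β ∈ (1−λ,1], and X₀ ∈ ℝ^d. Let B : [0,T] → ℝ^m satisfy |B(u)−B(v)| ≤ K|u−v|^λ for all u,v ∈ [0,T], and assume the coefficients b and σ are bounded by M and satisfy |σ(t,x)−σ(t,y)| ≤ M|x−y| for all x,y ∈ ℝ^d, t ∈ [0,T], and |σ(t,x)−σ(s,x)| ≤ M|t−s|^β for all x ∈ ℝ^d, s,t ∈ [0,T]. Then for every µ ∈ (1/2,λ) there exists a constant C > 0, depending only on T, d, m, λ, K, M, β, µ and |X₀| (and not on N), such that for every positive integer N with δ = T/N ≤ 1 the continuously interpolated Euler approximation Y^δ satisfies sup_{t∈[0,T]} |Y^δ(t)| ≤ C and |Y^δ(s) − Y^δ(r)| ≤ C (s−r)^µ for all 0 ≤ r < s ≤ T. -/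
/-- `ℓ¹`-type norm of a vector: the sum of absolute values of its entries. -/
def vnorm {n : ℕ} (y : Fin n → ℝ) : ℝ := ∑ i, |y i|

/-- Norm of a `d × m` matrix: the sum of absolute values of its entries. -/
def mnorm {d m : ℕ} (A : Fin d → Fin m → ℝ) : ℝ := ∑ i, ∑ j, |A i j|

/-- Values of the Euler scheme at the grid points `τ_n = nδ`:
`Y(τ_{n+1}) = Y(τ_n) + b(τ_n, Y(τ_n)) δ + σ(τ_n, Y(τ_n)) (B(τ_{n+1}) − B(τ_n))`. -/
noncomputable def eulerGrid {d m : ℕ} (δ : ℝ)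
    (b : ℝ → (Fin d → ℝ) → Fin d → ℝ)
    (σ : ℝ → (Fin d → ℝ) → Fin d → Fin m → ℝ)
    (B : ℝ → Fin m → ℝ) (X0 : Fin d → ℝ) : ℕ → Fin d → ℝ
  | 0 => X0
  | n + 1 =>
      let Y := eulerGrid δ b σ B X0 n
      fun i => Y i + b (n * δ) Y i * δ
        + ∑ j, σ (n * δ) Y i j * (B ((n + 1 : ℕ) * δ) j - B (n * δ) j)

/-- Continuously interpolated Euler approximation: for `t ∈ [τ_n, τ_{n+1}]`,
`Y(t) = Y(τ_n) + b(τ_n, Y(τ_n)) (t − τ_n) + σ(τ_n, Y(τ_n)) (B(t) − B(τ_n))`. -/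
noncomputable def eulerY {d m : ℕ} (δ : ℝ)
    (b : ℝ → (Fin d → ℝ) → Fin d → ℝ)
    (σ : ℝ → (Fin d → ℝ) → Fin d → Fin m → ℝ)
    (B : ℝ → Fin m → ℝ) (X0 : Fin d → ℝ) (t : ℝ) : Fin d → ℝ :=
  let n := ⌊t / δ⌋₊
  let Y := eulerGrid δ b σ B X0 n
  fun i => Y i + b (n * δ) Y i * (t - n * δ) + ∑ j, σ (n * δ) Y i j * (B t j - B (n * δ) j)

lemma vnorm_nonneg {n : ℕ} (y : Fin n → ℝ) : 0 ≤ vnorm y :=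
  Finset.sum_nonneg fun _ _ => abs_nonneg _

lemma mnorm_nonneg {d m : ℕ} (A : Fin d → Fin m → ℝ) : 0 ≤ mnorm A :=
  Finset.sum_nonneg fun _ _ => Finset.sum_nonneg fun _ _ => abs_nonneg _

lemma abs_le_vnorm {n : ℕ} (y : Fin n → ℝ) (i : Fin n) : |y i| ≤ vnorm y := by
  exact Finset.single_le_sum (f := fun i => |y i|) (fun _ _ => abs_nonneg _) (Finset.mem_univ i)

lemma vnorm_add_le {n : ℕ} (x y : Fin n → ℝ) :
    vnorm (fun i => x i + y i) ≤ vnorm x + vnorm y := by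
  rw [vnorm, vnorm, vnorm, ← Finset.sum_add_distrib]
  exact Finset.sum_le_sum fun i _ => abs_add_le _ _

lemma vnorm_mul_const {n : ℕ} (x : Fin n → ℝ) (c : ℝ) :
    vnorm (fun i => x i * c) = vnorm x * |c| := by
  simp [vnorm, abs_mul, Finset.sum_mul]

lemma vnorm_matvec {d m : ℕ} (A : Fin d → Fin m → ℝ) (v : Fin m → ℝ) :
    vnorm (fun i => ∑ j, A i j * v j) ≤ mnorm A * vnorm v := by
  rw [vnorm, mnorm, Finset.sum_mul]
  refine Finset.sum_le_sum fun i _ => ?_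
  calc |∑ j, A i j * v j| ≤ ∑ j, |A i j * v j| := Finset.abs_sum_le_sum_abs _ _
    _ ≤ ∑ j, |A i j| * vnorm v := by
        refine Finset.sum_le_sum fun j _ => ?_
        rw [abs_mul]
        exact mul_le_mul_of_nonneg_left (abs_le_vnorm v j) (abs_nonneg _)
    _ = (∑ j, |A i j|) * vnorm v := by rw [Finset.sum_mul]

lemma vnorm_sum_le {n : ℕ} (s : Finset ℕ) (f : ℕ → Fin n → ℝ) :
    vnorm (fun i => ∑ j ∈ s, f j i) ≤ ∑ j ∈ s, vnorm (f j) := by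
  rw [vnorm]
  calc ∑ i, |∑ j ∈ s, f j i| ≤ ∑ i, ∑ j ∈ s, |f j i| :=
        Finset.sum_le_sum fun i _ => Finset.abs_sum_le_sum_abs _ _
    _ = ∑ j ∈ s, ∑ i, |f j i| := Finset.sum_comm
    _ = ∑ j ∈ s, vnorm (f j) := rfl

lemma mnorm_add_le {d m : ℕ} (x y : Fin d → Fin m → ℝ) :
    mnorm (fun i j => x i j + y i j) ≤ mnorm x + mnorm y := by
  rw [mnorm, mnorm, mnorm, ← Finset.sum_add_distrib]
  refine Finset.sum_le_sum fun i _ => ?_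
  rw [← Finset.sum_add_distrib]
  exact Finset.sum_le_sum fun j _ => abs_add_le _ _

noncomputable def Sg {d m : ℕ} (δ : ℝ)
    (b : ℝ → (Fin d → ℝ) → Fin d → ℝ)
    (σ : ℝ → (Fin d → ℝ) → Fin d → Fin m → ℝ)
    (B : ℝ → Fin m → ℝ) (X0 : Fin d → ℝ) (n k : ℕ) : Fin d → ℝ :=
  fun i => ∑ j ∈ Finset.Ico n k, ∑ l,
    σ (j * δ) (eulerGrid δ b σ B X0 j) i l * (B ((j + 1 : ℕ) * δ) l - B ((j : ℕ) * δ) l)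

noncomputable def Rg {d m : ℕ} (δ : ℝ)
    (b : ℝ → (Fin d → ℝ) → Fin d → ℝ)
    (σ : ℝ → (Fin d → ℝ) → Fin d → Fin m → ℝ)
    (B : ℝ → Fin m → ℝ) (X0 : Fin d → ℝ) (n k : ℕ) : Fin d → ℝ :=
  fun i => Sg δ b σ B X0 n k i
    - ∑ l, σ (n * δ) (eulerGrid δ b σ B X0 n) i l * (B ((k : ℕ) * δ) l - B ((n : ℕ) * δ) l)

lemma eulerGrid_succ {d m : ℕ} (δ : ℝ) (b : ℝ → (Fin d → ℝ) → Fin d → ℝ)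
    (σ : ℝ → (Fin d → ℝ) → Fin d → Fin m → ℝ) (B : ℝ → Fin m → ℝ) (X0 : Fin d → ℝ)
    (n : ℕ) (i : Fin d) :
    eulerGrid δ b σ B X0 (n + 1) i = eulerGrid δ b σ B X0 n i
      + b (n * δ) (eulerGrid δ b σ B X0 n) i * δ
      + ∑ j, σ (n * δ) (eulerGrid δ b σ B X0 n) i j
          * (B ((n + 1 : ℕ) * δ) j - B ((n : ℕ) * δ) j) := rfl

lemma telescope {d m : ℕ} (δ : ℝ) (b : ℝ → (Fin d → ℝ) → Fin d → ℝ)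
    (σ : ℝ → (Fin d → ℝ) → Fin d → Fin m → ℝ) (B : ℝ → Fin m → ℝ) (X0 : Fin d → ℝ)
    (n : ℕ) : ∀ k, n ≤ k → ∀ i, eulerGrid δ b σ B X0 k i - eulerGrid δ b σ B X0 n i
      = (∑ j ∈ Finset.Ico n k, b (j * δ) (eulerGrid δ b σ B X0 j) i * δ)
        + Sg δ b σ B X0 n k i := by
  intro k
  induction k with
  | zero => intro h i; simp [Nat.le_zero.mp h, Sg]
  | succ k ih =>
    intro h i
    rcases Nat.lt_or_ge n (k+1) with h' | h'
    · have hnk : n ≤ k := Nat.lt_succ_iff.mp h'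
      have := ih hnk i
      rw [Finset.sum_Ico_succ_top hnk, Sg, Finset.sum_Ico_succ_top hnk, eulerGrid_succ]
      have hS : Sg δ b σ B X0 n k i = ∑ j ∈ Finset.Ico n k, ∑ l,
          σ (j * δ) (eulerGrid δ b σ B X0 j) i l
            * (B ((j + 1 : ℕ) * δ) l - B ((j : ℕ) * δ) l) := rfl
      rw [hS] at this
      linarith [this]
    · have : n = k + 1 := le_antisymm h h'
      subst this; simp [Sg]

lemma Sg_split {d m : ℕ} (δ : ℝ) (b : ℝ → (Fin d → ℝ) → Fin d → ℝ)
    (σ : ℝ → (Fin d → ℝ) → Fin d → Fin m → ℝ) (B : ℝ → Fin m → ℝ) (X0 : Fin d → ℝ)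
    {n p k : ℕ} (h1 : n ≤ p) (h2 : p ≤ k) (i : Fin d) :
    Sg δ b σ B X0 n k i = Sg δ b σ B X0 n p i + Sg δ b σ B X0 p k i := by
  rw [Sg, Sg, Sg, ← Finset.sum_Ico_consecutive _ h1 h2]

lemma Rg_chasles {d m : ℕ} (δ : ℝ) (b : ℝ → (Fin d → ℝ) → Fin d → ℝ)
    (σ : ℝ → (Fin d → ℝ) → Fin d → Fin m → ℝ) (B : ℝ → Fin m → ℝ) (X0 : Fin d → ℝ)
    {n p k : ℕ} (h1 : n ≤ p) (h2 : p ≤ k) (i : Fin d) :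
    Rg δ b σ B X0 n k i = Rg δ b σ B X0 n p i + Rg δ b σ B X0 p k i
      + ∑ l, (σ (p * δ) (eulerGrid δ b σ B X0 p) i l
              - σ (n * δ) (eulerGrid δ b σ B X0 n) i l)
          * (B ((k : ℕ) * δ) l - B ((p : ℕ) * δ) l) := by
  simp only [Rg, Sg_split δ b σ B X0 h1 h2 i]
  have key : ∑ l, σ (n * δ) (eulerGrid δ b σ B X0 n) i l * (B ((k : ℕ) * δ) l - B ((n : ℕ) * δ) l)
      = ∑ l, (σ (n * δ) (eulerGrid δ b σ B X0 n) i l * (B ((p : ℕ) * δ) l - B ((n : ℕ) * δ) l)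
          + σ (p * δ) (eulerGrid δ b σ B X0 p) i l * (B ((k : ℕ) * δ) l - B ((p : ℕ) * δ) l)
          - (σ (p * δ) (eulerGrid δ b σ B X0 p) i l - σ (n * δ) (eulerGrid δ b σ B X0 n) i l)
              * (B ((k : ℕ) * δ) l - B ((p : ℕ) * δ) l)) :=
    Finset.sum_congr rfl fun l _ => by ring
  rw [key, Finset.sum_sub_distrib, Finset.sum_add_distrib]
  ring

set_option maxHeartbeats 2000000 in
lemma grid_key (T : ℝ) (hT : 0 < T) {d m : ℕ}
    (lam K M β : ℝ) (hlam : 1 / 2 < lam) (hlam1 : lam < 1)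
    (hK : 0 < K) (hM : 0 < M) (hβ : 1 - lam < β) (hβ1 : β ≤ 1)
    (X0 : Fin d → ℝ) (B : ℝ → Fin m → ℝ)
    (b : ℝ → (Fin d → ℝ) → Fin d → ℝ)
    (σ : ℝ → (Fin d → ℝ) → Fin d → Fin m → ℝ)
    (hB : ∀ u ∈ Set.Icc (0:ℝ) T, ∀ v ∈ Set.Icc (0:ℝ) T,
      vnorm (fun j => B u j - B v j) ≤ K * |u - v| ^ lam)
    (hbBdd : ∀ t ∈ Set.Icc (0:ℝ) T, ∀ x : Fin d → ℝ, vnorm (b t x) ≤ M)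
    (hσBdd : ∀ t ∈ Set.Icc (0:ℝ) T, ∀ x : Fin d → ℝ, mnorm (σ t x) ≤ M)
    (hσLip : ∀ t ∈ Set.Icc (0:ℝ) T, ∀ x y : Fin d → ℝ,
      mnorm (fun i j => σ t x i j - σ t y i j) ≤ M * vnorm (fun i => x i - y i))
    (hσHol : ∀ s ∈ Set.Icc (0:ℝ) T, ∀ t ∈ Set.Icc (0:ℝ) T, ∀ x : Fin d → ℝ,
      mnorm (fun i j => σ t x i j - σ s x i j) ≤ M * |t - s| ^ β)
    (N : ℕ) (δ : ℝ) (hδ0 : 0 < δ) (hδ1 : δ ≤ 1) (hNδ : (N : ℝ) * δ = T)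
    (γ θ CY A h : ℝ) (hγ : γ = min lam β) (hθ : θ = γ + lam) (hCY : CY = M + M * K + 1)
    (hA0 : 0 < A)
    (hAineq : A * ((2/3 : ℝ) ^ (θ - 1)) + M * K * (CY + 1) * ((2/3 : ℝ) ^ θ) ≤ A)
    (hh0 : 0 < h) (hh1 : h ≤ 1) (hAh : A * h ^ γ ≤ 1) :
    ∀ q n k : ℕ, n ≤ k → k ≤ N → k - n = q → (q ≤ 1 ∨ ((k - n : ℕ) : ℝ) * δ ≤ h) →
      vnorm (Rg δ b σ B X0 n k) ≤ A * (((k - n : ℕ) : ℝ) * δ) ^ θ ∧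
      vnorm (fun i => eulerGrid δ b σ B X0 k i - eulerGrid δ b σ B X0 n i)
        ≤ CY * (((k - n : ℕ) : ℝ) * δ) ^ lam := by
  have hγ0 : 0 < γ := by rw [hγ]; exact lt_min (by linarith) (by linarith)
  have hgl : γ ≤ lam := by rw [hγ]; exact min_le_left _ _
  have hgb : γ ≤ β := by rw [hγ]; exact min_le_right _ _
  have hθ1 : 1 < θ := by
    have : 1 - lam < min lam β := lt_min (by linarith) hβ
    rw [hθ, hγ]; linarith
  have hlam0 : (0:ℝ) < lam := by linarith
  have hCY0 : 0 < CY := by rw [hCY]; positivity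
  set Yg := eulerGrid δ b σ B X0 with hYgdef
  have hmem : ∀ j : ℕ, j ≤ N → ((j : ℝ) * δ) ∈ Set.Icc (0:ℝ) T := by
    intro j hj
    constructor
    · positivity
    · calc (j : ℝ) * δ ≤ (N : ℝ) * δ :=
            mul_le_mul_of_nonneg_right (Nat.cast_le.2 hj) hδ0.le
        _ = T := hNδ
  have hcastsub : ∀ n p : ℕ, n ≤ p → ((p - n : ℕ) : ℝ) = (p : ℝ) - (n : ℝ) := by
    intro n p hnp; exact Nat.cast_sub hnp
  have hBgrid : ∀ n p : ℕ, n ≤ p → p ≤ N →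
      vnorm (fun l => B ((p : ℕ) * δ) l - B ((n : ℕ) * δ) l)
        ≤ K * (((p - n : ℕ) : ℝ) * δ) ^ lam := by
    intro n p hnp hpN
    have h1 := hB ((p : ℝ) * δ) (hmem p hpN) ((n : ℝ) * δ) (hmem n (le_trans hnp hpN))
    have habs : |(p : ℝ) * δ - (n : ℝ) * δ| = ((p - n : ℕ) : ℝ) * δ := by
      rw [hcastsub n p hnp, abs_of_nonneg]
      · ring
      · have h2 : (n:ℝ) * δ ≤ (p:ℝ) * δ :=
          mul_le_mul_of_nonneg_right (Nat.cast_le.2 hnp) hδ0.le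
        linarith
    rw [habs] at h1
    exact h1
  have hYstep : ∀ j : ℕ, j + 1 ≤ N →
      vnorm (fun i => Yg (j + 1) i - Yg j i) ≤ M * δ + M * (K * δ ^ lam) := by
    intro j hj
    have e : (fun i => Yg (j + 1) i - Yg j i)
        = fun i => b ((j : ℝ) * δ) (Yg j) i * δ
            + ∑ l, σ ((j : ℝ) * δ) (Yg j) i l * (B ((j + 1 : ℕ) * δ) l - B ((j : ℕ) * δ) l) := by
      funext i
      rw [hYgdef, eulerGrid_succ]
      ring
    rw [e]
    have t1 : vnorm (fun i => b ((j : ℝ) * δ) (Yg j) i * δ) ≤ M * δ := by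
      rw [vnorm_mul_const, abs_of_pos hδ0]
      exact mul_le_mul_of_nonneg_right (hbBdd _ (hmem j (by omega)) _) hδ0.le
    have t2 : vnorm (fun i => ∑ l, σ ((j : ℝ) * δ) (Yg j) i l
        * (B ((j + 1 : ℕ) * δ) l - B ((j : ℕ) * δ) l)) ≤ M * (K * δ ^ lam) := by
      refine le_trans (vnorm_matvec _ _) ?_
      have hb := hBgrid j (j + 1) (by omega) hj
      have : ((j + 1 - j : ℕ) : ℝ) * δ = δ := by
        have : j + 1 - j = 1 := by omega
        rw [this]; norm_num
      rw [this] at hb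
      exact mul_le_mul (hσBdd _ (hmem j (by omega)) _) hb (vnorm_nonneg _) hM.le
    calc vnorm (fun i => b ((j : ℝ) * δ) (Yg j) i * δ
          + ∑ l, σ ((j : ℝ) * δ) (Yg j) i l * (B ((j + 1 : ℕ) * δ) l - B ((j : ℕ) * δ) l))
        ≤ _ + _ := vnorm_add_le _ _
      _ ≤ M * δ + M * (K * δ ^ lam) := add_le_add t1 t2
  have hσjump : ∀ n p : ℕ, n ≤ p → p ≤ N → ∀ V : ℝ,
      vnorm (fun i => Yg p i - Yg n i) ≤ V →
      mnorm (fun i l => σ ((p : ℝ) * δ) (Yg p) i l - σ ((n : ℝ) * δ) (Yg n) i l)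
        ≤ M * V + M * (((p - n : ℕ) : ℝ) * δ) ^ β := by
    intro n p hnp hpN V hV
    have e : (fun i l => σ ((p : ℝ) * δ) (Yg p) i l - σ ((n : ℝ) * δ) (Yg n) i l)
        = fun i l => (σ ((p : ℝ) * δ) (Yg p) i l - σ ((p : ℝ) * δ) (Yg n) i l)
            + (σ ((p : ℝ) * δ) (Yg n) i l - σ ((n : ℝ) * δ) (Yg n) i l) := by
      funext i l; ring
    rw [e]
    refine le_trans (mnorm_add_le _ _) (add_le_add ?_ ?_)
    · refine le_trans (hσLip _ (hmem p hpN) _ _) ?_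
      exact mul_le_mul_of_nonneg_left hV hM.le
    · refine le_trans (hσHol _ (hmem n (le_trans hnp hpN)) _ (hmem p hpN) _) ?_
      have habs : |(p : ℝ) * δ - (n : ℝ) * δ| = ((p - n : ℕ) : ℝ) * δ := by
        rw [hcastsub n p hnp, abs_of_nonneg]
        · ring
        · have : (n:ℝ) ≤ (p:ℝ) := Nat.cast_le.2 hnp
          nlinarith
      rw [habs]
  intro q
  induction q using Nat.strong_induction_on with
  | _ q IH =>
    rcases q with _ | _ | q
    · -- q = 0
      intro n k hnk hkN hq _
      have hkn : k = n := by omega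
      subst hkn
      have hR0 : Rg δ b σ B X0 k k = fun _ => (0:ℝ) := by
        funext i; simp [Rg, Sg]
      have hY0 : (fun i => Yg k i - Yg k i) = fun _ => (0:ℝ) := by
        funext i; ring
      have hv0 : vnorm (fun _ : Fin d => (0:ℝ)) = 0 := by simp [vnorm]
      constructor
      · rw [hR0, hv0]; positivity
      · rw [hY0, hv0]; positivity
    · -- q = 1
      intro n k hnk hkN hq _
      have hkn : k = n + 1 := by omega
      subst hkn
      have hsub1 : ((n + 1 - n : ℕ) : ℝ) = 1 := by
        have : n + 1 - n = 1 := by omega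
        rw [this]; norm_num
      constructor
      · have hR0 : Rg δ b σ B X0 n (n + 1) = fun _ => (0:ℝ) := by
          funext i
          simp [Rg, Sg, Nat.Ico_succ_singleton]
        rw [hR0]
        have hv0 : vnorm (fun _ : Fin d => (0:ℝ)) = 0 := by simp [vnorm]
        rw [hv0]; positivity
      · have hst := hYstep n hkN
        have hdl : δ ≤ δ ^ lam := by
          calc δ = δ ^ (1:ℝ) := (Real.rpow_one δ).symm
            _ ≤ δ ^ lam := Real.rpow_le_rpow_of_exponent_ge hδ0 hδ1 hlam1.le
        have hdl0 : 0 ≤ δ ^ lam := Real.rpow_nonneg hδ0.le lam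
        rw [hsub1, one_mul]
        calc vnorm (fun i => Yg (n+1) i - Yg n i) ≤ M * δ + M * (K * δ ^ lam) := hst
          _ ≤ CY * δ ^ lam := by
              rw [hCY]
              have h1 : M * δ ≤ M * δ ^ lam := mul_le_mul_of_nonneg_left hdl hM.le
              have h2 : 0 ≤ M * K * δ ^ lam := by positivity
              linarith
    · -- q + 2
      intro n k hnk hkN hq hsmall
      have hq2 : 2 ≤ k - n := by omega
      have hL : ((k - n : ℕ) : ℝ) * δ ≤ h := by
        rcases hsmall with h1 | h2
        · omega
        · exact h2
      set q1 : ℕ := (q + 3) / 2 with hq1def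
      set p : ℕ := n + q1 with hpdef
      have hq1a : 1 ≤ q1 := by omega
      have hq1b : q1 < q + 2 := by omega
      have hq2a : 1 ≤ (q + 2) - q1 := by omega
      have hpk : p ≤ k := by omega
      have hnp : n ≤ p := by omega
      have hpN : p ≤ N := le_trans hpk hkN
      have hpn : p - n = q1 := by omega
      have hkp : k - p = (q + 2) - q1 := by omega
      set q2 : ℕ := (q + 2) - q1 with hq2def
      have h3q1 : 3 * q1 ≤ 2 * (q + 2) := by omega
      have h3q2 : 3 * q2 ≤ 2 * (q + 2) := by omega
      have hq12 : q1 + q2 = q + 2 := by omega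
      set L : ℝ := ((k - n : ℕ) : ℝ) * δ with hLdef
      set L1 : ℝ := (q1 : ℝ) * δ with hL1def
      set L2 : ℝ := (q2 : ℝ) * δ with hL2def
      have hL1pos : 0 < L1 := mul_pos (by exact_mod_cast Nat.pos_of_ne_zero (by omega)) hδ0
      have hL2pos : 0 < L2 := mul_pos (by exact_mod_cast Nat.pos_of_ne_zero (by omega)) hδ0
      have hLpos : 0 < L := mul_pos (by exact_mod_cast Nat.pos_of_ne_zero (by omega)) hδ0
      have hLsum : L1 + L2 = L := by
        rw [hL1def, hL2def, hLdef, ← add_mul]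
        congr 1
        exact_mod_cast congrArg (Nat.cast : ℕ → ℝ) (by omega : q1 + q2 = k - n)
      have h23a : L1 ≤ 2/3 * L := by
        have h1 : (3:ℝ) * (q1:ℝ) ≤ 2 * ((k - n : ℕ) : ℝ) := by
          exact_mod_cast (by omega : 3 * q1 ≤ 2 * (k - n))
        have h2 := mul_le_mul_of_nonneg_right h1 hδ0.le
        rw [hL1def, hLdef]; linarith
      have h23b : L2 ≤ 2/3 * L := by
        have h1 : (3:ℝ) * (q2:ℝ) ≤ 2 * ((k - n : ℕ) : ℝ) := by
          exact_mod_cast (by omega : 3 * q2 ≤ 2 * (k - n))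
        have h2 := mul_le_mul_of_nonneg_right h1 hδ0.le
        rw [hL2def, hLdef]; linarith
      have hL1L : L1 ≤ L := by linarith
      have hL2L : L2 ≤ L := by linarith
      have hLh : L ≤ h := hL
      have hL1h : L1 ≤ h := le_trans hL1L hLh
      have hL11 : L1 ≤ 1 := le_trans hL1h hh1
      have hLle1 : L ≤ 1 := le_trans hLh hh1
      -- induction hypotheses
      have IH1 := IH q1 (by omega) n p hnp hpN (by omega) (Or.inr (by rw [hpn]; exact hL1h))
      have IH2 := IH q2 (by omega) p k hpk hkN (by omega)
        (Or.inr (by rw [hkp]; exact le_trans hL2L hLh))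
      rw [hpn] at IH1
      rw [hkp] at IH2
      obtain ⟨hR1, hY1⟩ := IH1
      obtain ⟨hR2, hY2⟩ := IH2
      -- bound on the extra Chasles term
      have hσj := hσjump n p hnp hpN (CY * L1 ^ lam) hY1
      rw [hpn] at hσj
      have hBv := hBgrid p k hpk hkN
      rw [hkp] at hBv
      have hextra : vnorm (fun i => ∑ l, (σ ((p : ℝ) * δ) (Yg p) i l
            - σ ((n : ℝ) * δ) (Yg n) i l) * (B ((k : ℕ) * δ) l - B ((p : ℕ) * δ) l))
          ≤ (M * (CY * L1 ^ lam) + M * L1 ^ β) * (K * L2 ^ lam) := by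
        refine le_trans (vnorm_matvec _ _) ?_
        refine mul_le_mul hσj hBv (vnorm_nonneg _) ?_
        have := Real.rpow_nonneg hL1pos.le lam
        have := Real.rpow_nonneg hL1pos.le β
        positivity
      -- rpow arithmetic
      have hLθ0 : 0 ≤ L ^ θ := Real.rpow_nonneg hLpos.le θ
      have e1 : L1 ^ lam ≤ L1 ^ γ := Real.rpow_le_rpow_of_exponent_ge hL1pos hL11 hgl
      have e2 : L1 ^ β ≤ L1 ^ γ := Real.rpow_le_rpow_of_exponent_ge hL1pos hL11 hgb
      have e3 : L1 ^ γ ≤ (2/3 : ℝ) ^ γ * L ^ γ := by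
        rw [← Real.mul_rpow (by norm_num) hLpos.le]
        exact Real.rpow_le_rpow hL1pos.le h23a hγ0.le
      have e4 : L2 ^ lam ≤ (2/3 : ℝ) ^ lam * L ^ lam := by
        rw [← Real.mul_rpow (by norm_num) hLpos.le]
        exact Real.rpow_le_rpow hL2pos.le h23b hlam0.le
      have e23θ : ((2/3 : ℝ) ^ γ * L ^ γ) * ((2/3 : ℝ) ^ lam * L ^ lam)
          = (2/3 : ℝ) ^ θ * L ^ θ := by
        rw [hθ, Real.rpow_add (by norm_num : (0:ℝ) < 2/3), Real.rpow_add hLpos]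
        ring
      have hRmain : vnorm (Rg δ b σ B X0 n k) ≤ A * L ^ θ := by
        have echas : Rg δ b σ B X0 n k = fun i =>
            (Rg δ b σ B X0 n p i + Rg δ b σ B X0 p k i)
            + ∑ l, (σ ((p : ℝ) * δ) (Yg p) i l - σ ((n : ℝ) * δ) (Yg n) i l)
                * (B ((k : ℕ) * δ) l - B ((p : ℕ) * δ) l) := by
          funext i; exact Rg_chasles δ b σ B X0 hnp hpk i
        have step1 : vnorm (Rg δ b σ B X0 n k)
            ≤ (vnorm (Rg δ b σ B X0 n p) + vnorm (Rg δ b σ B X0 p k))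
              + (M * (CY * L1 ^ lam) + M * L1 ^ β) * (K * L2 ^ lam) := by
          rw [echas]
          refine le_trans (vnorm_add_le _ _) (add_le_add ?_ hextra)
          exact vnorm_add_le _ _
        -- first two terms
        have hpow1 : L1 ^ θ ≤ (2/3 : ℝ) ^ (θ - 1) * L ^ (θ - 1) * L1 := by
          have hsplit : L1 ^ θ = L1 ^ (θ - 1) * L1 := by
            rw [show θ = (θ - 1) + 1 by ring, Real.rpow_add_one hL1pos.ne']
            ring_nf
          rw [hsplit]
          refine mul_le_mul_of_nonneg_right ?_ hL1pos.le
          rw [← Real.mul_rpow (by norm_num) hLpos.le]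
          exact Real.rpow_le_rpow hL1pos.le h23a (by linarith)
        have hpow2 : L2 ^ θ ≤ (2/3 : ℝ) ^ (θ - 1) * L ^ (θ - 1) * L2 := by
          have hsplit : L2 ^ θ = L2 ^ (θ - 1) * L2 := by
            rw [show θ = (θ - 1) + 1 by ring, Real.rpow_add_one hL2pos.ne']
            ring_nf
          rw [hsplit]
          refine mul_le_mul_of_nonneg_right ?_ hL2pos.le
          rw [← Real.mul_rpow (by norm_num) hLpos.le]
          exact Real.rpow_le_rpow hL2pos.le h23b (by linarith)
        have hLθsplit : L ^ (θ - 1) * L = L ^ θ := by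
          rw [show θ = (θ - 1) + 1 by ring, Real.rpow_add_one hLpos.ne']
          ring_nf
        have hfirst : vnorm (Rg δ b σ B X0 n p) + vnorm (Rg δ b σ B X0 p k)
            ≤ A * ((2/3 : ℝ) ^ (θ - 1)) * L ^ θ := by
          have c1 : vnorm (Rg δ b σ B X0 n p) ≤ A * ((2/3 : ℝ) ^ (θ - 1) * L ^ (θ - 1) * L1) :=
            le_trans hR1 (mul_le_mul_of_nonneg_left hpow1 hA0.le)
          have c2 : vnorm (Rg δ b σ B X0 p k) ≤ A * ((2/3 : ℝ) ^ (θ - 1) * L ^ (θ - 1) * L2) :=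
            le_trans hR2 (mul_le_mul_of_nonneg_left hpow2 hA0.le)
          calc vnorm (Rg δ b σ B X0 n p) + vnorm (Rg δ b σ B X0 p k)
              ≤ A * ((2/3 : ℝ) ^ (θ - 1) * L ^ (θ - 1) * L1)
                + A * ((2/3 : ℝ) ^ (θ - 1) * L ^ (θ - 1) * L2) := add_le_add c1 c2
            _ = A * ((2/3 : ℝ) ^ (θ - 1)) * (L ^ (θ - 1) * (L1 + L2)) := by ring
            _ = A * ((2/3 : ℝ) ^ (θ - 1)) * L ^ θ := by rw [hLsum, hLθsplit]
        have hsecond : (M * (CY * L1 ^ lam) + M * L1 ^ β) * (K * L2 ^ lam)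
            ≤ M * K * (CY + 1) * ((2/3 : ℝ) ^ θ) * L ^ θ := by
          have hc1 : M * (CY * L1 ^ lam) + M * L1 ^ β ≤ M * (CY + 1) * L1 ^ γ := by
            have g1 : M * (CY * L1 ^ lam) ≤ M * CY * L1 ^ γ := by
              rw [mul_assoc]
              exact mul_le_mul_of_nonneg_left
                (mul_le_mul_of_nonneg_left e1 hCY0.le) hM.le
            have g2 : M * L1 ^ β ≤ M * L1 ^ γ := mul_le_mul_of_nonneg_left e2 hM.le
            have g3 : M * (CY + 1) * L1 ^ γ = M * CY * L1 ^ γ + M * L1 ^ γ := by ring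
            linarith
          have hc2 : K * L2 ^ lam ≤ K * ((2/3 : ℝ) ^ lam * L ^ lam) :=
            mul_le_mul_of_nonneg_left e4 hK.le
          have hc3 : L1 ^ γ ≤ (2/3 : ℝ) ^ γ * L ^ γ := e3
          have hnn1 : (0:ℝ) ≤ M * (CY + 1) := by positivity
          have hnn2 : 0 ≤ K * L2 ^ lam := by
            have := Real.rpow_nonneg hL2pos.le lam; positivity
          calc (M * (CY * L1 ^ lam) + M * L1 ^ β) * (K * L2 ^ lam)
              ≤ (M * (CY + 1) * L1 ^ γ) * (K * L2 ^ lam) :=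
                mul_le_mul_of_nonneg_right hc1 hnn2
            _ ≤ (M * (CY + 1) * ((2/3 : ℝ) ^ γ * L ^ γ)) * (K * ((2/3 : ℝ) ^ lam * L ^ lam)) := by
                have g1 : 0 ≤ (2/3 : ℝ) ^ γ * L ^ γ := by
                  have := Real.rpow_nonneg hLpos.le γ
                  have : (0:ℝ) ≤ (2/3 : ℝ) ^ γ := Real.rpow_nonneg (by norm_num) γ
                  positivity
                refine mul_le_mul ?_ hc2 hnn2 ?_
                · exact mul_le_mul_of_nonneg_left hc3 hnn1
                · positivity
            _ = M * K * (CY + 1) * (((2/3 : ℝ) ^ γ * L ^ γ) * ((2/3 : ℝ) ^ lam * L ^ lam)) := by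
                ring
            _ = M * K * (CY + 1) * ((2/3 : ℝ) ^ θ) * L ^ θ := by rw [e23θ]; ring
        calc vnorm (Rg δ b σ B X0 n k)
            ≤ (vnorm (Rg δ b σ B X0 n p) + vnorm (Rg δ b σ B X0 p k))
              + (M * (CY * L1 ^ lam) + M * L1 ^ β) * (K * L2 ^ lam) := step1
          _ ≤ A * ((2/3 : ℝ) ^ (θ - 1)) * L ^ θ
              + M * K * (CY + 1) * ((2/3 : ℝ) ^ θ) * L ^ θ := add_le_add hfirst hsecond
          _ = (A * ((2/3 : ℝ) ^ (θ - 1)) + M * K * (CY + 1) * ((2/3 : ℝ) ^ θ)) * L ^ θ := by ring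
          _ ≤ A * L ^ θ := mul_le_mul_of_nonneg_right hAineq hLθ0
      refine ⟨hRmain, ?_⟩
      -- Y part
      have htel : (fun i => Yg k i - Yg n i) = fun i =>
          (∑ j ∈ Finset.Ico n k, b ((j : ℝ) * δ) (Yg j) i * δ)
            + (Rg δ b σ B X0 n k i
                + ∑ l, σ ((n : ℝ) * δ) (Yg n) i l * (B ((k : ℕ) * δ) l - B ((n : ℕ) * δ) l)) := by
        funext i
        rw [hYgdef, telescope δ b σ B X0 n k hnk i]
        have : Sg δ b σ B X0 n k i = Rg δ b σ B X0 n k i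
            + ∑ l, σ ((n : ℝ) * δ) (eulerGrid δ b σ B X0 n) i l
                * (B ((k : ℕ) * δ) l - B ((n : ℕ) * δ) l) := by
          rw [Rg]; ring
        rw [this]
      have hdrift : vnorm (fun i => ∑ j ∈ Finset.Ico n k, b ((j : ℝ) * δ) (Yg j) i * δ)
          ≤ M * L := by
        refine le_trans (vnorm_sum_le _ _) ?_
        have each : ∀ j ∈ Finset.Ico n k,
            vnorm (fun i => b ((j : ℝ) * δ) (Yg j) i * δ) ≤ M * δ := by
          intro j hj
          rw [vnorm_mul_const, abs_of_pos hδ0]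
          refine mul_le_mul_of_nonneg_right (hbBdd _ (hmem j ?_) _) hδ0.le
          have := (Finset.mem_Ico.mp hj).2
          omega
        calc ∑ j ∈ Finset.Ico n k, vnorm (fun i => b ((j : ℝ) * δ) (Yg j) i * δ)
            ≤ ∑ j ∈ Finset.Ico n k, (M * δ) := Finset.sum_le_sum each
          _ = ((k - n : ℕ) : ℝ) * (M * δ) := by
              rw [Finset.sum_const, Nat.card_Ico, nsmul_eq_mul]
          _ = M * L := by rw [hLdef]; ring
      have hfrozen : vnorm (fun i => ∑ l, σ ((n : ℝ) * δ) (Yg n) i l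
          * (B ((k : ℕ) * δ) l - B ((n : ℕ) * δ) l)) ≤ M * (K * L ^ lam) := by
        refine le_trans (vnorm_matvec _ _) ?_
        refine mul_le_mul (hσBdd _ (hmem n (le_trans hnk hkN)) _) (hBgrid n k hnk hkN)
          (vnorm_nonneg _) hM.le
      have hLlam0 : 0 ≤ L ^ lam := Real.rpow_nonneg hLpos.le lam
      have hMLa : M * L ≤ M * L ^ lam := by
        have : L ≤ L ^ lam := by
          calc L = L ^ (1:ℝ) := (Real.rpow_one L).symm
            _ ≤ L ^ lam := Real.rpow_le_rpow_of_exponent_ge hLpos hLle1 hlam1.le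
        exact mul_le_mul_of_nonneg_left this hM.le
      have hALθ : A * L ^ θ ≤ L ^ lam := by
        have hsplit : L ^ θ = L ^ γ * L ^ lam := by
          rw [hθ, Real.rpow_add hLpos]
        have hLγ : L ^ γ ≤ h ^ γ := Real.rpow_le_rpow hLpos.le hLh hγ0.le
        calc A * L ^ θ = A * L ^ γ * L ^ lam := by rw [hsplit]; ring
          _ ≤ A * h ^ γ * L ^ lam := by
              refine mul_le_mul_of_nonneg_right ?_ hLlam0
              exact mul_le_mul_of_nonneg_left hLγ hA0.le
          _ ≤ 1 * L ^ lam := mul_le_mul_of_nonneg_right hAh hLlam0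
          _ = L ^ lam := one_mul _
      calc vnorm (fun i => Yg k i - Yg n i)
          ≤ vnorm (fun i => ∑ j ∈ Finset.Ico n k, b ((j : ℝ) * δ) (Yg j) i * δ)
            + (vnorm (Rg δ b σ B X0 n k)
              + vnorm (fun i => ∑ l, σ ((n : ℝ) * δ) (Yg n) i l
                  * (B ((k : ℕ) * δ) l - B ((n : ℕ) * δ) l))) := by
            rw [htel]
            exact le_trans (vnorm_add_le _ _) (add_le_add_right (vnorm_add_le _ _) _)
        _ ≤ M * L + (A * L ^ θ + M * (K * L ^ lam)) :=
            add_le_add hdrift (add_le_add hRmain hfrozen)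
        _ ≤ M * L ^ lam + (L ^ lam + M * (K * L ^ lam)) :=
            add_le_add hMLa (add_le_add hALθ le_rfl)
        _ = (M + M * K + 1) * L ^ lam := by ring
        _ = CY * L ^ lam := by rw [hCY]

set_option maxHeartbeats 2000000 in
lemma grid_chain (T : ℝ) (hT : 0 < T) {d m : ℕ}
    (lam K M β : ℝ) (hlam : 1 / 2 < lam) (hlam1 : lam < 1)
    (hK : 0 < K) (hM : 0 < M) (hβ : 1 - lam < β) (hβ1 : β ≤ 1)
    (X0 : Fin d → ℝ) (B : ℝ → Fin m → ℝ)
    (b : ℝ → (Fin d → ℝ) → Fin d → ℝ)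
    (σ : ℝ → (Fin d → ℝ) → Fin d → Fin m → ℝ)
    (hB : ∀ u ∈ Set.Icc (0:ℝ) T, ∀ v ∈ Set.Icc (0:ℝ) T,
      vnorm (fun j => B u j - B v j) ≤ K * |u - v| ^ lam)
    (hbBdd : ∀ t ∈ Set.Icc (0:ℝ) T, ∀ x : Fin d → ℝ, vnorm (b t x) ≤ M)
    (hσBdd : ∀ t ∈ Set.Icc (0:ℝ) T, ∀ x : Fin d → ℝ, mnorm (σ t x) ≤ M)
    (hσLip : ∀ t ∈ Set.Icc (0:ℝ) T, ∀ x y : Fin d → ℝ,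
      mnorm (fun i j => σ t x i j - σ t y i j) ≤ M * vnorm (fun i => x i - y i))
    (hσHol : ∀ s ∈ Set.Icc (0:ℝ) T, ∀ t ∈ Set.Icc (0:ℝ) T, ∀ x : Fin d → ℝ,
      mnorm (fun i j => σ t x i j - σ s x i j) ≤ M * |t - s| ^ β)
    (N : ℕ) (δ : ℝ) (hδ0 : 0 < δ) (hδ1 : δ ≤ 1) (hNδ : (N : ℝ) * δ = T)
    (γ θ CY A h : ℝ) (hγ : γ = min lam β) (hθ : θ = γ + lam) (hCY : CY = M + M * K + 1)
    (hA0 : 0 < A)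
    (hAineq : A * ((2/3 : ℝ) ^ (θ - 1)) + M * K * (CY + 1) * ((2/3 : ℝ) ^ θ) ≤ A)
    (hh0 : 0 < h) (hh1 : h ≤ 1) (hAh : A * h ^ γ ≤ 1) :
    ∀ q n k : ℕ, n ≤ k → k ≤ N → k - n = q →
      vnorm (fun i => eulerGrid δ b σ B X0 k i - eulerGrid δ b σ B X0 n i)
        ≤ CY * ((((k - n : ℕ) : ℝ) * δ) ^ lam
            + (((k - n : ℕ) : ℝ) * δ) * (h / 2) ^ (lam - 1)) := by
  have key := grid_key T hT lam K M β hlam hlam1 hK hM hβ hβ1 X0 B b σ hB hbBdd hσBdd hσLip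
    hσHol N δ hδ0 hδ1 hNδ γ θ CY A h hγ hθ hCY hA0 hAineq hh0 hh1 hAh
  have hCY0 : 0 < CY := by rw [hCY]; positivity
  have hlam0 : (0:ℝ) < lam := by linarith
  have hw0 : (0:ℝ) ≤ (h / 2) ^ (lam - 1) := Real.rpow_nonneg (by positivity) _
  set Yg := eulerGrid δ b σ B X0 with hYgdef
  intro q
  induction q using Nat.strong_induction_on with
  | _ q IH =>
    intro n k hnk hkN hq
    set L : ℝ := ((k - n : ℕ) : ℝ) * δ with hLdef
    have hL0 : 0 ≤ L := mul_nonneg (Nat.cast_nonneg _) hδ0.le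
    have hLlam0 : 0 ≤ L ^ lam := Real.rpow_nonneg hL0 lam
    by_cases hcase : k - n ≤ 1 ∨ L ≤ h
    · have hdis : q ≤ 1 ∨ ((k - n : ℕ) : ℝ) * δ ≤ h := by
        rcases hcase with h1 | h2
        · exact Or.inl (by omega)
        · exact Or.inr h2
      have hY := (key q n k hnk hkN hq hdis).2
      have h2 : 0 ≤ L * ((h/2) ^ (lam - 1)) := mul_nonneg hL0 hw0
      calc vnorm (fun i => Yg k i - Yg n i) ≤ CY * L ^ lam := hY
        _ ≤ CY * (L ^ lam + L * (h/2) ^ (lam - 1)) := by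
            exact mul_le_mul_of_nonneg_left (by linarith) hCY0.le
    · push_neg at hcase
      obtain ⟨hq2', hhL⟩ := hcase
      have hq2 : 2 ≤ k - n := by omega
      set j0 : ℕ := ⌊h / δ⌋₊ with hj0def
      set js : ℕ := max 1 j0 with hjsdef
      have hjs1 : 1 ≤ js := le_max_left _ _
      have hjsq : js < k - n := by
        rcases Nat.eq_zero_or_pos j0 with h0 | hpos
        · have : js = 1 := by omega
          omega
        · have hj0d : (j0 : ℝ) * δ ≤ h := by
            have h1 : (j0 : ℝ) ≤ h / δ := Nat.floor_le (by positivity)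
            calc (j0 : ℝ) * δ ≤ (h / δ) * δ := mul_le_mul_of_nonneg_right h1 hδ0.le
              _ = h := by field_simp
          have hjs0 : js = j0 := by omega
          -- (j0:ℝ)*δ ≤ h < L = (k-n)*δ  ⇒ j0 < k - n
          have : (j0 : ℝ) * δ < ((k - n : ℕ) : ℝ) * δ := by
            calc (j0 : ℝ) * δ ≤ h := hj0d
              _ < L := hhL
          have hcast : (j0 : ℝ) < ((k - n : ℕ) : ℝ) := by
            by_contra hcon
            push_neg at hcon
            have := mul_le_mul_of_nonneg_right hcon hδ0.le
            linarith
          have : j0 < k - n := by exact_mod_cast hcast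
          omega
      set p : ℕ := n + js with hpdef
      have hnp : n ≤ p := by omega
      have hpk : p ≤ k := by omega
      have hpN : p ≤ N := le_trans hpk hkN
      have hpn : p - n = js := by omega
      set L1 : ℝ := (js : ℝ) * δ with hL1def
      set L2 : ℝ := ((k - p : ℕ) : ℝ) * δ with hL2def
      have hL1pos : 0 < L1 := mul_pos (by exact_mod_cast Nat.pos_of_ne_zero (by omega)) hδ0
      have hL2nn : 0 ≤ L2 := mul_nonneg (Nat.cast_nonneg _) hδ0.le
      have hLsum : L1 + L2 = L := by
        rw [hL1def, hL2def, hLdef, ← add_mul]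
        congr 1
        exact_mod_cast congrArg (Nat.cast : ℕ → ℝ) (by omega : js + (k - p) = k - n)
      have hL2L : L2 ≤ L := by linarith
      -- half-step lower bound : h / 2 ≤ L1
      have hhalf : h / 2 ≤ L1 := by
        rcases Nat.eq_zero_or_pos j0 with h0 | hpos
        · have hjs0 : js = 1 := by omega
          have : h / δ < 1 := by
            have := Nat.floor_eq_zero.mp h0
            exact_mod_cast this
          have : h < δ := by
            have := (div_lt_one hδ0).mp this
            linarith
          rw [hL1def, hjs0]
          push_cast
          linarith
        · have hjs0 : js = j0 := by omega
          have h1 : h / δ < (j0 : ℝ) + 1 := Nat.lt_floor_add_one _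
          have h2 : h < ((j0 : ℝ) + 1) * δ := by
            have := mul_lt_mul_of_pos_right h1 hδ0
            calc h = (h / δ) * δ := by field_simp
              _ < ((j0 : ℝ) + 1) * δ := this
          have h3 : ((j0 : ℝ) + 1) ≤ 2 * (j0 : ℝ) := by
            have : (1:ℝ) ≤ (j0 : ℝ) := by exact_mod_cast hpos
            linarith
          have h4 : ((j0 : ℝ) + 1) * δ ≤ 2 * ((j0:ℝ) * δ) := by
            have := mul_le_mul_of_nonneg_right h3 hδ0.le
            linarith
          rw [hL1def, hjs0]
          linarith
      -- the first piece, via grid_key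
      have hpiece : vnorm (fun i => Yg p i - Yg n i) ≤ CY * (L1 * (h/2) ^ (lam - 1)) := by
        have hY1 : vnorm (fun i => Yg p i - Yg n i) ≤ CY * L1 ^ lam := by
          have hdisj : js ≤ 1 ∨ ((p - n : ℕ) : ℝ) * δ ≤ h := by
            rcases Nat.eq_zero_or_pos j0 with h0 | hpos
            · exact Or.inl (by omega)
            · refine Or.inr ?_
              rw [hpn]
              have hjs0 : js = j0 := by omega
              rw [hjs0]
              have h1 : (j0 : ℝ) ≤ h / δ := Nat.floor_le (by positivity)
              calc (j0 : ℝ) * δ ≤ (h / δ) * δ := mul_le_mul_of_nonneg_right h1 hδ0.le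
                _ = h := by field_simp
          have := (key js n p hnp hpN hpn hdisj).2
          rw [hpn] at this
          exact this
        have hsplit : L1 ^ lam = L1 ^ (lam - 1) * L1 := by
          rw [show lam = (lam - 1) + 1 by ring, Real.rpow_add_one hL1pos.ne']
          ring_nf
        have hmono : L1 ^ (lam - 1) ≤ (h/2) ^ (lam - 1) :=
          Real.rpow_le_rpow_of_nonpos (by positivity) hhalf (by linarith)
        calc vnorm (fun i => Yg p i - Yg n i) ≤ CY * L1 ^ lam := hY1
          _ = CY * (L1 ^ (lam - 1) * L1) := by rw [hsplit]
          _ ≤ CY * ((h/2) ^ (lam - 1) * L1) := by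
              exact mul_le_mul_of_nonneg_left
                (mul_le_mul_of_nonneg_right hmono hL1pos.le) hCY0.le
          _ = CY * (L1 * (h/2) ^ (lam - 1)) := by ring
      -- the remaining piece, via IH
      have hrest := IH (k - p) (by omega) p k hpk hkN rfl
      -- combine
      have htri : (fun i => Yg k i - Yg n i)
          = fun i => (Yg k i - Yg p i) + (Yg p i - Yg n i) := by
        funext i; ring
      have hL2lam : L2 ^ lam ≤ L ^ lam := Real.rpow_le_rpow hL2nn hL2L hlam0.le
      calc vnorm (fun i => Yg k i - Yg n i)
          ≤ vnorm (fun i => Yg k i - Yg p i) + vnorm (fun i => Yg p i - Yg n i) := by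
            rw [htri]; exact vnorm_add_le _ _
        _ ≤ CY * (L2 ^ lam + L2 * (h/2) ^ (lam - 1)) + CY * (L1 * (h/2) ^ (lam - 1)) :=
            add_le_add hrest hpiece
        _ = CY * (L2 ^ lam + (L1 + L2) * (h/2) ^ (lam - 1)) := by ring
        _ = CY * (L2 ^ lam + L * (h/2) ^ (lam - 1)) := by rw [hLsum]
        _ ≤ CY * (L ^ lam + L * (h/2) ^ (lam - 1)) := by
            exact mul_le_mul_of_nonneg_left (by linarith) hCY0.le

set_option maxHeartbeats 2000000 in
lemma cont_holder (T : ℝ) (hT : 0 < T) {d m : ℕ}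
    (lam K M : ℝ) (hlam0 : 0 < lam) (hlam1 : lam < 1) (hK : 0 < K) (hM : 0 < M)
    (X0 : Fin d → ℝ) (B : ℝ → Fin m → ℝ)
    (b : ℝ → (Fin d → ℝ) → Fin d → ℝ)
    (σ : ℝ → (Fin d → ℝ) → Fin d → Fin m → ℝ)
    (hB : ∀ u ∈ Set.Icc (0:ℝ) T, ∀ v ∈ Set.Icc (0:ℝ) T,
      vnorm (fun j => B u j - B v j) ≤ K * |u - v| ^ lam)
    (hbBdd : ∀ t ∈ Set.Icc (0:ℝ) T, ∀ x : Fin d → ℝ, vnorm (b t x) ≤ M)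
    (hσBdd : ∀ t ∈ Set.Icc (0:ℝ) T, ∀ x : Fin d → ℝ, mnorm (σ t x) ≤ M)
    (N : ℕ) (δ : ℝ) (hδ0 : 0 < δ) (hNδ : (N : ℝ) * δ = T)
    (Cg : ℝ) (hCg0 : 0 ≤ Cg)
    (hgrid : ∀ n k : ℕ, n ≤ k → k ≤ N →
      vnorm (fun i => eulerGrid δ b σ B X0 k i - eulerGrid δ b σ B X0 n i)
        ≤ Cg * (((k - n : ℕ) : ℝ) * δ) ^ lam) :
    ∀ r s : ℝ, 0 ≤ r → r < s → s ≤ T →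
      vnorm (fun i => eulerY δ b σ B X0 s i - eulerY δ b σ B X0 r i)
        ≤ (2 * (M * (max T 1) ^ (1 - lam) + M * K) + Cg) * (s - r) ^ lam := by
  set T1 : ℝ := max T 1 with hT1def
  set Yg := eulerGrid δ b σ B X0 with hYgdef
  have hmem : ∀ j : ℕ, j ≤ N → ((j : ℝ) * δ) ∈ Set.Icc (0:ℝ) T := by
    intro j hj
    constructor
    · positivity
    · calc (j : ℝ) * δ ≤ (N : ℝ) * δ :=
            mul_le_mul_of_nonneg_right (Nat.cast_le.2 hj) hδ0.le
        _ = T := hNδ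
  have hYC : ∀ t : ℝ, eulerY δ b σ B X0 t = fun i => Yg (⌊t / δ⌋₊) i
      + b ((⌊t / δ⌋₊ : ℝ) * δ) (Yg ⌊t / δ⌋₊) i * (t - (⌊t / δ⌋₊ : ℝ) * δ)
      + ∑ l, σ ((⌊t / δ⌋₊ : ℝ) * δ) (Yg ⌊t / δ⌋₊) i l
          * (B t l - B ((⌊t / δ⌋₊ : ℝ) * δ) l) := fun t => rfl
  have hfl1 : ∀ t : ℝ, 0 ≤ t → ((⌊t / δ⌋₊ : ℝ) * δ) ≤ t := by
    intro t ht
    have h1 : (⌊t / δ⌋₊ : ℝ) ≤ t / δ := Nat.floor_le (by positivity)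
    calc (⌊t / δ⌋₊ : ℝ) * δ ≤ (t / δ) * δ := mul_le_mul_of_nonneg_right h1 hδ0.le
      _ = t := by field_simp
  have hfl2 : ∀ t : ℝ, t < ((⌊t / δ⌋₊ : ℝ) + 1) * δ := by
    intro t
    have h1 : t / δ < (⌊t / δ⌋₊ : ℝ) + 1 := Nat.lt_floor_add_one _
    have h2 := mul_lt_mul_of_pos_right h1 hδ0
    calc t = (t / δ) * δ := by field_simp
      _ < ((⌊t / δ⌋₊ : ℝ) + 1) * δ := h2
  have hflN : ∀ t : ℝ, t ≤ T → ⌊t / δ⌋₊ ≤ N := by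
    intro t ht
    have h1 : t / δ ≤ (N : ℝ) := by
      rw [div_le_iff₀ hδ0]; linarith [hNδ]
    calc ⌊t / δ⌋₊ ≤ ⌊(N : ℝ)⌋₊ := Nat.floor_le_floor h1
      _ = N := Nat.floor_natCast N
  have hinterp : ∀ j : ℕ, j ≤ N → ∀ c : ℝ, 0 ≤ c → ∀ v v' : ℝ,
      v ∈ Set.Icc (0:ℝ) T → v' ∈ Set.Icc (0:ℝ) T →
      vnorm (fun i => b ((j : ℝ) * δ) (Yg j) i * c
          + ∑ l, σ ((j : ℝ) * δ) (Yg j) i l * (B v l - B v' l))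
        ≤ M * c + M * (K * |v - v'| ^ lam) := by
    intro j hj c hc v v' hv hv'
    refine le_trans (vnorm_add_le _ _) (add_le_add ?_ ?_)
    · rw [vnorm_mul_const, abs_of_nonneg hc]
      exact mul_le_mul_of_nonneg_right (hbBdd _ (hmem j hj) _) hc
    · refine le_trans (vnorm_matvec _ _) ?_
      exact mul_le_mul (hσBdd _ (hmem j hj) _) (hB v hv v' hv') (vnorm_nonneg _) hM.le
  intro r s hr hrs hsT
  have hsr0 : 0 < s - r := by linarith
  have hsrlam0 : 0 ≤ (s - r) ^ lam := Real.rpow_nonneg hsr0.le _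
  have hsmem : s ∈ Set.Icc (0:ℝ) T := ⟨by linarith, hsT⟩
  have hrmem : r ∈ Set.Icc (0:ℝ) T := ⟨hr, by linarith⟩
  have hT1pow0 : (0:ℝ) ≤ T1 ^ (1 - lam) := Real.rpow_nonneg (by positivity) _
  have hsr_pow : s - r ≤ T1 ^ (1 - lam) * (s - r) ^ lam := by
    have h1 : s - r = (s - r) ^ lam * (s - r) ^ (1 - lam) := by
      rw [← Real.rpow_add hsr0]; norm_num
    have h2 : (s - r) ^ (1 - lam) ≤ T1 ^ (1 - lam) := by
      refine Real.rpow_le_rpow hsr0.le ?_ (by linarith)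
      have : T ≤ T1 := le_max_left _ _
      linarith
    calc s - r = (s - r) ^ lam * (s - r) ^ (1 - lam) := h1
      _ ≤ (s - r) ^ lam * T1 ^ (1 - lam) :=
          mul_le_mul_of_nonneg_left h2 hsrlam0
      _ = T1 ^ (1 - lam) * (s - r) ^ lam := by ring
  have hcollect : 2 * (M * (s - r)) + 2 * (M * (K * (s - r) ^ lam)) + Cg * (s - r) ^ lam
      ≤ (2 * (M * T1 ^ (1 - lam) + M * K) + Cg) * (s - r) ^ lam := by
    have h1 : M * (s - r) ≤ M * (T1 ^ (1 - lam) * (s - r) ^ lam) :=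
      mul_le_mul_of_nonneg_left hsr_pow hM.le
    have h2 : (2 * (M * T1 ^ (1 - lam) + M * K) + Cg) * (s - r) ^ lam
        = 2 * (M * (T1 ^ (1 - lam) * (s - r) ^ lam))
          + 2 * (M * (K * (s - r) ^ lam)) + Cg * (s - r) ^ lam := by ring
    linarith
  set n := ⌊r / δ⌋₊ with hn
  set k := ⌊s / δ⌋₊ with hk
  have hnk : n ≤ k := Nat.floor_le_floor ((div_le_div_iff_of_pos_right hδ0).mpr hrs.le)
  have hkN : k ≤ N := hflN s hsT
  have hnN : n ≤ N := le_trans hnk hkN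
  have hrn : ((n : ℝ) * δ) ≤ r := hfl1 r hr
  have hr1 : r < ((n : ℝ) + 1) * δ := hfl2 r
  have hks : ((k : ℝ) * δ) ≤ s := hfl1 s (by linarith)
  by_cases hcase : k = n
  · -- same interval
    have hdiff : (fun i => eulerY δ b σ B X0 s i - eulerY δ b σ B X0 r i)
        = fun i => b ((n : ℝ) * δ) (Yg n) i * (s - r)
            + ∑ l, σ ((n : ℝ) * δ) (Yg n) i l * (B s l - B r l) := by
      funext i
      have e1 : (∑ l, σ ((n : ℝ) * δ) (Yg n) i l * (B s l - B ((n : ℝ) * δ) l))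
          - (∑ l, σ ((n : ℝ) * δ) (Yg n) i l * (B r l - B ((n : ℝ) * δ) l))
          = ∑ l, σ ((n : ℝ) * δ) (Yg n) i l * (B s l - B r l) := by
        rw [← Finset.sum_sub_distrib]
        exact Finset.sum_congr rfl fun l _ => by ring
      simp only [hYC, ← hk, ← hn, hcase]
      linear_combination e1
    rw [hdiff]
    have hb1 := hinterp n hnN (s - r) (by linarith) s r hsmem hrmem
    rw [abs_of_pos hsr0] at hb1
    refine le_trans hb1 ?_
    have g1 : 0 ≤ M * (s - r) := by positivity
    have g2 : 0 ≤ M * (K * (s - r) ^ lam) := by positivity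
    have g3 : 0 ≤ Cg * (s - r) ^ lam := by positivity
    linarith
  · -- n < k
    have hnk' : n + 1 ≤ k := by omega
    have hn1k : ((n : ℝ) + 1) * δ ≤ (k : ℝ) * δ := by
      have : ((n : ℝ) + 1) ≤ (k : ℝ) := by exact_mod_cast hnk'
      exact mul_le_mul_of_nonneg_right this hδ0.le
    have hrk : r < (k : ℝ) * δ := lt_of_lt_of_le hr1 hn1k
    -- piece a : eulerY s − Yg k
    have hda : (fun i => eulerY δ b σ B X0 s i - Yg k i)
        = fun i => b ((k : ℝ) * δ) (Yg k) i * (s - (k : ℝ) * δ)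
            + ∑ l, σ ((k : ℝ) * δ) (Yg k) i l * (B s l - B ((k : ℝ) * δ) l) := by
      funext i
      simp only [hYC, ← hk]
      ring
    have hba := hinterp k hkN (s - (k : ℝ) * δ) (by linarith) s ((k : ℝ) * δ) hsmem (hmem k hkN)
    rw [abs_of_nonneg (by linarith : (0:ℝ) ≤ s - (k:ℝ) * δ)] at hba
    have hba2 : vnorm (fun i => eulerY δ b σ B X0 s i - Yg k i)
        ≤ M * (s - r) + M * (K * (s - r) ^ lam) := by
      rw [hda]
      refine le_trans hba (add_le_add ?_ ?_)
      · exact mul_le_mul_of_nonneg_left (by linarith) hM.le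
      · refine mul_le_mul_of_nonneg_left (mul_le_mul_of_nonneg_left ?_ hK.le) hM.le
        exact Real.rpow_le_rpow (by linarith) (by linarith) hlam0.le
    -- piece c : Yg (n+1) − eulerY r
    have hdc : (fun i => Yg (n + 1) i - eulerY δ b σ B X0 r i)
        = fun i => b ((n : ℝ) * δ) (Yg n) i * (((n + 1 : ℕ) : ℝ) * δ - r)
            + ∑ l, σ ((n : ℝ) * δ) (Yg n) i l * (B (((n + 1 : ℕ) : ℝ) * δ) l - B r l) := by
      funext i
      have e2 : Yg (n + 1) i = Yg n i + b ((n : ℝ) * δ) (Yg n) i * δ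
          + ∑ l, σ ((n : ℝ) * δ) (Yg n) i l
              * (B (((n + 1 : ℕ) : ℝ) * δ) l - B ((n : ℝ) * δ) l) :=
        eulerGrid_succ δ b σ B X0 n i
      have e1 : (∑ l, σ ((n : ℝ) * δ) (Yg n) i l
            * (B (((n + 1 : ℕ) : ℝ) * δ) l - B ((n : ℝ) * δ) l))
          - (∑ l, σ ((n : ℝ) * δ) (Yg n) i l * (B r l - B ((n : ℝ) * δ) l))
          = ∑ l, σ ((n : ℝ) * δ) (Yg n) i l * (B (((n + 1 : ℕ) : ℝ) * δ) l - B r l) := by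
        rw [← Finset.sum_sub_distrib]
        exact Finset.sum_congr rfl fun l _ => by ring
      simp only [hYC, ← hn]
      rw [e2]
      push_cast at e1 ⊢
      linear_combination e1
    have hcnn : (0:ℝ) ≤ ((n + 1 : ℕ) : ℝ) * δ - r := by
      push_cast
      linarith
    have hvsr : ((n + 1 : ℕ) : ℝ) * δ - r ≤ s - r := by
      push_cast
      nlinarith [hn1k, hks]
    have hbc := hinterp n hnN (((n + 1 : ℕ) : ℝ) * δ - r) hcnn (((n + 1 : ℕ) : ℝ) * δ) r
      (hmem (n + 1) (by omega)) hrmem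
    rw [abs_of_nonneg hcnn] at hbc
    have hbc2 : vnorm (fun i => Yg (n + 1) i - eulerY δ b σ B X0 r i)
        ≤ M * (s - r) + M * (K * (s - r) ^ lam) := by
      rw [hdc]
      refine le_trans hbc (add_le_add ?_ ?_)
      · exact mul_le_mul_of_nonneg_left hvsr hM.le
      · refine mul_le_mul_of_nonneg_left (mul_le_mul_of_nonneg_left ?_ hK.le) hM.le
        exact Real.rpow_le_rpow hcnn hvsr hlam0.le
    -- piece b : grid
    have hgb := hgrid (n + 1) k hnk' hkN
    have hgb2 : vnorm (fun i => Yg k i - Yg (n + 1) i) ≤ Cg * (s - r) ^ lam := by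
      refine le_trans hgb ?_
      refine mul_le_mul_of_nonneg_left ?_ hCg0
      refine Real.rpow_le_rpow (by positivity) ?_ hlam0.le
      have hcast : ((k - (n + 1) : ℕ) : ℝ) = (k : ℝ) - ((n : ℝ) + 1) := by
        rw [Nat.cast_sub hnk']
        push_cast
        ring
      rw [hcast]
      have hexp : ((k : ℝ) - ((n : ℝ) + 1)) * δ = (k : ℝ) * δ - ((n : ℝ) + 1) * δ := by ring
      rw [hexp]
      linarith
    -- combine
    have htri : (fun i => eulerY δ b σ B X0 s i - eulerY δ b σ B X0 r i)
        = fun i => (eulerY δ b σ B X0 s i - Yg k i)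
            + ((Yg k i - Yg (n + 1) i) + (Yg (n + 1) i - eulerY δ b σ B X0 r i)) := by
      funext i; ring
    calc vnorm (fun i => eulerY δ b σ B X0 s i - eulerY δ b σ B X0 r i)
        ≤ vnorm (fun i => eulerY δ b σ B X0 s i - Yg k i)
          + vnorm (fun i => (Yg k i - Yg (n + 1) i) + (Yg (n + 1) i - eulerY δ b σ B X0 r i)) := by
          rw [htri]; exact vnorm_add_le _ _
      _ ≤ vnorm (fun i => eulerY δ b σ B X0 s i - Yg k i)
          + (vnorm (fun i => Yg k i - Yg (n + 1) i)
            + vnorm (fun i => Yg (n + 1) i - eulerY δ b σ B X0 r i)) :=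
          add_le_add_right (vnorm_add_le _ _) _
      _ ≤ (M * (s - r) + M * (K * (s - r) ^ lam))
          + (Cg * (s - r) ^ lam + (M * (s - r) + M * (K * (s - r) ^ lam))) :=
          add_le_add hba2 (add_le_add hgb2 hbc2)
      _ ≤ (2 * (M * T1 ^ (1 - lam) + M * K) + Cg) * (s - r) ^ lam := by linarith

set_option maxHeartbeats 2000000 in
/-- Theorem 1 (ii), pathwise form: if moreover the coefficients `b` and `σ` are bounded
(by `M`), then for every `µ ∈ (1/2, λ)` there is `C > 0` (independent of `N`) such that for
every mesh `δ = T/N ≤ 1` the Euler approximation is bounded by `C` and is `µ`-Hölder on all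
of `[0,T]` with constant `C`. -/
theorem stmt_10 (T : ℝ) (hT : 0 < T) (d m : ℕ) (hd : 1 ≤ d) (hm : 1 ≤ m)
    (lam K M β : ℝ) (hlam : 1 / 2 < lam) (hlam1 : lam < 1)
    (hK : 0 < K) (hM : 0 < M) (hβ : 1 - lam < β) (hβ1 : β ≤ 1)
    (X0 : Fin d → ℝ) (B : ℝ → Fin m → ℝ)
    (b : ℝ → (Fin d → ℝ) → Fin d → ℝ)
    (σ : ℝ → (Fin d → ℝ) → Fin d → Fin m → ℝ)
    (hB : ∀ u ∈ Set.Icc (0:ℝ) T, ∀ v ∈ Set.Icc (0:ℝ) T,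
      vnorm (fun j => B u j - B v j) ≤ K * |u - v| ^ lam)
    (hbBdd : ∀ t ∈ Set.Icc (0:ℝ) T, ∀ x : Fin d → ℝ, vnorm (b t x) ≤ M)
    (hσBdd : ∀ t ∈ Set.Icc (0:ℝ) T, ∀ x : Fin d → ℝ, mnorm (σ t x) ≤ M)
    (hσLip : ∀ t ∈ Set.Icc (0:ℝ) T, ∀ x y : Fin d → ℝ,
      mnorm (fun i j => σ t x i j - σ t y i j) ≤ M * vnorm (fun i => x i - y i))
    (hσHol : ∀ s ∈ Set.Icc (0:ℝ) T, ∀ t ∈ Set.Icc (0:ℝ) T, ∀ x : Fin d → ℝ,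
      mnorm (fun i j => σ t x i j - σ s x i j) ≤ M * |t - s| ^ β) :
    ∀ μ : ℝ, 1 / 2 < μ → μ < lam →
      ∃ C : ℝ, 0 < C ∧
        ∀ N : ℕ, 0 < N → T / N ≤ 1 →
          (∀ t ∈ Set.Icc (0:ℝ) T, vnorm (eulerY (T / N) b σ B X0 t) ≤ C) ∧
          (∀ r s : ℝ, 0 ≤ r → r < s → s ≤ T →
            vnorm (fun i => eulerY (T / N) b σ B X0 s i - eulerY (T / N) b σ B X0 r i)
              ≤ C * (s - r) ^ μ) := by
  
  intro μ hμ1 hμ2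
  have hlam0 : (0:ℝ) < lam := by linarith
  have hβ0 : (0:ℝ) < β := by linarith
  obtain ⟨γ, hγdef⟩ : ∃ x : ℝ, x = min lam β := ⟨_, rfl⟩
  obtain ⟨θ, hθdef⟩ : ∃ x : ℝ, x = γ + lam := ⟨_, rfl⟩
  obtain ⟨CY, hCYdef⟩ : ∃ x : ℝ, x = M + M * K + 1 := ⟨_, rfl⟩
  have hγ0 : 0 < γ := by rw [hγdef]; exact lt_min hlam0 hβ0
  have hgl : γ ≤ lam := by rw [hγdef]; exact min_le_left _ _
  have hθ1 : 1 < θ := by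
    have : 1 - lam < min lam β := lt_min (by linarith) hβ
    rw [hθdef, hγdef]; linarith
  have hθ0 : 0 < θ := by linarith
  have hCY0 : 0 < CY := by rw [hCYdef]; positivity
  obtain ⟨ρ, hρdef⟩ : ∃ x : ℝ, x = (2/3 : ℝ) ^ (θ - 1) := ⟨_, rfl⟩
  have hρ0 : 0 < ρ := by rw [hρdef]; exact Real.rpow_pos_of_pos (by norm_num) _
  have hρ1 : ρ < 1 := by
    rw [hρdef]
    exact Real.rpow_lt_one (by norm_num) (by norm_num) (by linarith)
  obtain ⟨A, hAdef⟩ : ∃ x : ℝ, x = M * K * (CY + 1) / (1 - ρ) + 1 := ⟨_, rfl⟩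
  have hA0 : 0 < A := by
    have h1 : 0 ≤ M * K * (CY + 1) / (1 - ρ) :=
      div_nonneg (by positivity) (by linarith)
    rw [hAdef]; linarith
  have hAineq : A * ((2/3 : ℝ) ^ (θ - 1)) + M * K * (CY + 1) * ((2/3 : ℝ) ^ θ) ≤ A := by
    rw [← hρdef]
    have h1 : (2/3 : ℝ) ^ θ ≤ 1 :=
      Real.rpow_le_one (by norm_num) (by norm_num) hθ0.le
    have h2 : M * K * (CY + 1) * ((2/3 : ℝ) ^ θ) ≤ M * K * (CY + 1) :=
      mul_le_of_le_one_right (by positivity) h1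
    have h3 : (1 - ρ) * A = M * K * (CY + 1) + (1 - ρ) := by
      have hne : (1:ℝ) - ρ ≠ 0 := ne_of_gt (by linarith)
      rw [hAdef]
      field_simp
    have h4 : A - A * ρ = M * K * (CY + 1) + (1 - ρ) := by linear_combination h3
    linarith
  obtain ⟨h, hhdef⟩ : ∃ x : ℝ, x = min 1 ((1 / (A + 1)) ^ (1 / γ)) := ⟨_, rfl⟩
  have hh0 : 0 < h := by
    rw [hhdef]
    exact lt_min one_pos (Real.rpow_pos_of_pos (by positivity) _)
  have hh1 : h ≤ 1 := by rw [hhdef]; exact min_le_left _ _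
  have hAh : A * h ^ γ ≤ 1 := by
    have h1 : h ≤ (1 / (A + 1)) ^ (1 / γ) := by rw [hhdef]; exact min_le_right _ _
    have h2 : h ^ γ ≤ ((1 / (A + 1)) ^ (1 / γ)) ^ γ :=
      Real.rpow_le_rpow hh0.le h1 hγ0.le
    have h3 : ((1 / (A + 1)) ^ (1 / γ)) ^ γ = 1 / (A + 1) := by
      rw [← Real.rpow_mul (by positivity), one_div_mul_cancel hγ0.ne', Real.rpow_one]
    rw [h3] at h2
    have h4 : A * h ^ γ ≤ A * (1 / (A + 1)) := mul_le_mul_of_nonneg_left h2 hA0.le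
    have h5 : A * (1 / (A + 1)) ≤ 1 := by
      rw [mul_one_div]
      exact (div_le_one (by linarith)).mpr (by linarith)
    linarith
  have hmax0 : (0:ℝ) < max T 1 := lt_max_of_lt_right one_pos
  have hw0 : (0:ℝ) ≤ (h / 2) ^ (lam - 1) := Real.rpow_nonneg (by positivity) _
  have hmaxpow0 : (0:ℝ) ≤ (max T 1) ^ (1 - lam) := Real.rpow_nonneg hmax0.le _
  obtain ⟨Cg, hCgdef⟩ : ∃ x : ℝ,
      x = CY * (1 + (max T 1) ^ (1 - lam) * (h / 2) ^ (lam - 1)) := ⟨_, rfl⟩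
  have hCg0 : 0 ≤ Cg := by
    rw [hCgdef]
    have : 0 ≤ (max T 1) ^ (1 - lam) * (h / 2) ^ (lam - 1) := mul_nonneg hmaxpow0 hw0
    nlinarith [hCY0.le]
  obtain ⟨Cstar, hCstardef⟩ : ∃ x : ℝ,
      x = 2 * (M * (max T 1) ^ (1 - lam) + M * K) + Cg := ⟨_, rfl⟩
  have hCstar0 : 0 ≤ Cstar := by
    rw [hCstardef]
    have h1 : 0 ≤ M * (max T 1) ^ (1 - lam) := mul_nonneg hM.le hmaxpow0
    have h2 : 0 ≤ M * K := by positivity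
    linarith
  have hmaxlam0 : (0:ℝ) ≤ (max T 1) ^ lam := Real.rpow_nonneg hmax0.le _
  have hmaxmu0 : (0:ℝ) ≤ (max T 1) ^ (lam - μ) := Real.rpow_nonneg hmax0.le _
  have hX00 : 0 ≤ vnorm X0 := vnorm_nonneg _
  refine ⟨vnorm X0 + Cstar * (max T 1) ^ lam + Cstar * (max T 1) ^ (lam - μ) + 1, ?_, ?_⟩
  · have h1 : 0 ≤ Cstar * (max T 1) ^ lam := mul_nonneg hCstar0 hmaxlam0
    have h2 : 0 ≤ Cstar * (max T 1) ^ (lam - μ) := mul_nonneg hCstar0 hmaxmu0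
    linarith
  intro N hN hδ1
  have hNr : (0:ℝ) < (N : ℝ) := by exact_mod_cast hN
  set δ : ℝ := T / (N : ℝ) with hδdef
  have hδ0 : 0 < δ := div_pos hT hNr
  have hNδ : (N : ℝ) * δ = T := by rw [hδdef]; field_simp
  have hgrid : ∀ n k : ℕ, n ≤ k → k ≤ N →
      vnorm (fun i => eulerGrid δ b σ B X0 k i - eulerGrid δ b σ B X0 n i)
        ≤ Cg * (((k - n : ℕ) : ℝ) * δ) ^ lam := by
    have chain := grid_chain T hT lam K M β hlam hlam1 hK hM hβ hβ1 X0 B b σ hB hbBdd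
      hσBdd hσLip hσHol N δ hδ0 hδ1 hNδ γ θ CY A h hγdef hθdef hCYdef hA0 hAineq hh0 hh1 hAh
    intro n k hnk hkN
    have hc := chain (k - n) n k hnk hkN rfl
    have hL0 : (0:ℝ) ≤ ((k - n : ℕ) : ℝ) * δ := mul_nonneg (Nat.cast_nonneg _) hδ0.le
    rcases eq_or_lt_of_le hL0 with h0 | hLpos
    · have hc0 : ((k - n : ℕ) : ℝ) = 0 := by
        rcases mul_eq_zero.mp h0.symm with h1 | h1
        · exact h1
        · exact absurd h1 hδ0.ne'
      have hkn : k - n = 0 := by exact_mod_cast hc0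
      have hkn' : k = n := by omega
      subst hkn'
      have hv : (fun i => eulerGrid δ b σ B X0 k i - eulerGrid δ b σ B X0 k i)
          = fun _ : Fin d => (0:ℝ) := by funext i; ring
      rw [hv]
      have : vnorm (fun _ : Fin d => (0:ℝ)) = 0 := by simp [vnorm]
      rw [this]
      have : (0:ℝ) ≤ (((k - k : ℕ) : ℝ) * δ) ^ lam := Real.rpow_nonneg (by positivity) _
      positivity
    · have hLT : ((k - n : ℕ) : ℝ) * δ ≤ max T 1 := by
        have h1 : ((k - n : ℕ) : ℝ) ≤ (N : ℝ) := by
          exact_mod_cast (by omega : k - n ≤ N)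
        have h2 : ((k - n : ℕ) : ℝ) * δ ≤ (N : ℝ) * δ :=
          mul_le_mul_of_nonneg_right h1 hδ0.le
        rw [hNδ] at h2
        exact le_trans h2 (le_max_left _ _)
      have hsplit : ((k - n : ℕ) : ℝ) * δ
          = (((k - n : ℕ) : ℝ) * δ) ^ lam * (((k - n : ℕ) : ℝ) * δ) ^ (1 - lam) := by
        rw [← Real.rpow_add hLpos]; norm_num
      have h2 : (((k - n : ℕ) : ℝ) * δ) ^ (1 - lam) ≤ (max T 1) ^ (1 - lam) :=
        Real.rpow_le_rpow hLpos.le hLT (by linarith)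
      have hLlam0 : 0 ≤ (((k - n : ℕ) : ℝ) * δ) ^ lam := Real.rpow_nonneg hLpos.le _
      have h3 : ((k - n : ℕ) : ℝ) * δ * (h / 2) ^ (lam - 1)
          ≤ (max T 1) ^ (1 - lam) * (h / 2) ^ (lam - 1) * (((k - n : ℕ) : ℝ) * δ) ^ lam := by
        calc ((k - n : ℕ) : ℝ) * δ * (h / 2) ^ (lam - 1)
            = (((k - n : ℕ) : ℝ) * δ) ^ lam * (((k - n : ℕ) : ℝ) * δ) ^ (1 - lam)
              * (h / 2) ^ (lam - 1) := by rw [← hsplit]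
          _ ≤ (((k - n : ℕ) : ℝ) * δ) ^ lam * (max T 1) ^ (1 - lam)
              * (h / 2) ^ (lam - 1) := by
              exact mul_le_mul_of_nonneg_right
                (mul_le_mul_of_nonneg_left h2 hLlam0) hw0
          _ = (max T 1) ^ (1 - lam) * (h / 2) ^ (lam - 1)
              * (((k - n : ℕ) : ℝ) * δ) ^ lam := by ring
      calc vnorm (fun i => eulerGrid δ b σ B X0 k i - eulerGrid δ b σ B X0 n i)
          ≤ CY * ((((k - n : ℕ) : ℝ) * δ) ^ lam
              + (((k - n : ℕ) : ℝ) * δ) * (h / 2) ^ (lam - 1)) := hc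
        _ ≤ CY * ((((k - n : ℕ) : ℝ) * δ) ^ lam
              + (max T 1) ^ (1 - lam) * (h / 2) ^ (lam - 1)
                * (((k - n : ℕ) : ℝ) * δ) ^ lam) :=
            mul_le_mul_of_nonneg_left (by linarith) hCY0.le
        _ = Cg * (((k - n : ℕ) : ℝ) * δ) ^ lam := by rw [hCgdef]; ring
  have hold := cont_holder T hT lam K M hlam0 hlam1 hK hM X0 B b σ hB hbBdd hσBdd
    N δ hδ0 hNδ Cg hCg0 hgrid
  have hold' : ∀ r s : ℝ, 0 ≤ r → r < s → s ≤ T →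
      vnorm (fun i => eulerY δ b σ B X0 s i - eulerY δ b σ B X0 r i)
        ≤ Cstar * (s - r) ^ lam := by
    intro r s h1 h2 h3
    rw [hCstardef]
    exact hold r s h1 h2 h3
  have hY0 : eulerY δ b σ B X0 0 = X0 := by
    funext i
    simp only [eulerY]
    rw [zero_div, Nat.floor_zero]
    simp [eulerGrid]
  constructor
  · -- boundedness
    intro t ht
    obtain ⟨ht0, htT⟩ := ht
    have hCl : vnorm X0 + Cstar * (max T 1) ^ lam
        ≤ vnorm X0 + Cstar * (max T 1) ^ lam + Cstar * (max T 1) ^ (lam - μ) + 1 := by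
      have : 0 ≤ Cstar * (max T 1) ^ (lam - μ) := mul_nonneg hCstar0 hmaxmu0
      linarith
    rcases eq_or_lt_of_le ht0 with h0 | h0
    · rw [← h0, hY0]
      have : 0 ≤ Cstar * (max T 1) ^ lam := mul_nonneg hCstar0 hmaxlam0
      linarith
    · have h1 := hold' 0 t le_rfl h0 htT
      rw [hY0, sub_zero] at h1
      have htri : (fun i => eulerY δ b σ B X0 t i)
          = fun i => (eulerY δ b σ B X0 t i - X0 i) + X0 i := by
        funext i; ring
      have h2 : t ^ lam ≤ (max T 1) ^ lam := by
        refine Real.rpow_le_rpow ht0 ?_ hlam0.le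
        exact le_trans htT (le_max_left _ _)
      calc vnorm (eulerY δ b σ B X0 t)
          = vnorm (fun i => (eulerY δ b σ B X0 t i - X0 i) + X0 i) := by rw [← htri]
        _ ≤ vnorm (fun i => eulerY δ b σ B X0 t i - X0 i) + vnorm X0 :=
            vnorm_add_le _ _
        _ ≤ Cstar * t ^ lam + vnorm X0 := add_le_add_left h1 _
        _ ≤ Cstar * (max T 1) ^ lam + vnorm X0 :=
            add_le_add_left (mul_le_mul_of_nonneg_left h2 hCstar0) _
        _ ≤ vnorm X0 + Cstar * (max T 1) ^ lam + Cstar * (max T 1) ^ (lam - μ) + 1 := by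
            linarith
  · -- Hölder
    intro r s hr hrs hsT
    have h1 := hold' r s hr hrs hsT
    have hsr0 : 0 < s - r := by linarith
    have hsrmu0 : 0 ≤ (s - r) ^ μ := Real.rpow_nonneg hsr0.le _
    have h2 : (s - r) ^ lam ≤ (max T 1) ^ (lam - μ) * (s - r) ^ μ := by
      have e1 : (s - r) ^ lam = (s - r) ^ μ * (s - r) ^ (lam - μ) := by
        rw [← Real.rpow_add hsr0]; ring_nf
      have e2 : (s - r) ^ (lam - μ) ≤ (max T 1) ^ (lam - μ) := by
        refine Real.rpow_le_rpow hsr0.le ?_ (by linarith)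
        have : s - r ≤ T := by linarith
        exact le_trans this (le_max_left _ _)
      calc (s - r) ^ lam = (s - r) ^ μ * (s - r) ^ (lam - μ) := e1
        _ ≤ (s - r) ^ μ * (max T 1) ^ (lam - μ) := mul_le_mul_of_nonneg_left e2 hsrmu0
        _ = (max T 1) ^ (lam - μ) * (s - r) ^ μ := by ring
    have h3 : Cstar * (s - r) ^ lam
        ≤ Cstar * ((max T 1) ^ (lam - μ) * (s - r) ^ μ) :=
      mul_le_mul_of_nonneg_left h2 hCstar0
    have h4 : Cstar * ((max T 1) ^ (lam - μ) * (s - r) ^ μ)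
        ≤ (vnorm X0 + Cstar * (max T 1) ^ lam + Cstar * (max T 1) ^ (lam - μ) + 1)
            * (s - r) ^ μ := by
      have e1 : Cstar * ((max T 1) ^ (lam - μ) * (s - r) ^ μ)
          = (Cstar * (max T 1) ^ (lam - μ)) * (s - r) ^ μ := by ring
      rw [e1]
      refine mul_le_mul_of_nonneg_right ?_ hsrmu0
      have g1 : 0 ≤ Cstar * (max T 1) ^ lam := mul_nonneg hCstar0 hmaxlam0
      linarith
    linarith
end

section
/- Let f : ℝ → ℝ satisfy, for some constant C > 0, the linear growth condition |f(x)| ≤ C(1+|x|) and the Lipschitz condition |f(x)−f(y)| ≤ C|x−y| for all x,y ∈ ℝ. Then there exists a constant C′ depending only on C such that for all α₁, α₂, x ∈ ℝ: |e^{α₁} f(e^{−α₁} x) − e^{α₂} f(e^{−α₂} x)| ≤ C′ (1 + e^{α₁} + e^{α₂} + |x|) |α₁ − α₂|. -/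
private lemma stmt_12_key (f : ℝ → ℝ) (C : ℝ) (hC : 0 < C)
    (hgrowth : ∀ x : ℝ, |f x| ≤ C * (1 + |x|))
    (hlip : ∀ x y : ℝ, |f x - f y| ≤ C * |x - y|)
    (α₁ α₂ x : ℝ) (h : α₂ ≤ α₁) :
    |Real.exp α₁ * f (Real.exp (-α₁) * x) - Real.exp α₂ * f (Real.exp (-α₂) * x)|
      ≤ 2 * C * (1 + Real.exp α₁ + Real.exp α₂ + |x|) * (α₁ - α₂) := by
  have ha₁ : 0 < Real.exp α₁ := Real.exp_pos _
  have ha₂ : 0 < Real.exp α₂ := Real.exp_pos _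
  have hle : Real.exp α₂ ≤ Real.exp α₁ := Real.exp_le_exp.mpr h
  have hexp : α₂ - α₁ + 1 ≤ Real.exp (α₂ - α₁) := Real.add_one_le_exp _
  have hmul : Real.exp α₁ * Real.exp (α₂ - α₁) = Real.exp α₂ := by
    rw [← Real.exp_add]; ring_nf
  have key1 : Real.exp α₁ - Real.exp α₂ ≤ Real.exp α₁ * (α₁ - α₂) := by
    nlinarith
  have h1 : Real.exp α₁ * Real.exp (-α₁) = 1 := by
    rw [← Real.exp_add]; simp
  have h2 : Real.exp α₂ * Real.exp (-α₂) = 1 := by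
    rw [← Real.exp_add]; simp
  have h3 : Real.exp α₂ * Real.exp (-α₁) = Real.exp (α₂ - α₁) := by
    rw [← Real.exp_add]; ring_nf
  have keyA : (Real.exp α₁ - Real.exp α₂) * Real.exp (-α₁) ≤ α₁ - α₂ := by
    have h4 : Real.exp α₂ * Real.exp (-α₁) = Real.exp (α₂ - α₁) := h3
    nlinarith
  have key2 : Real.exp α₂ * (Real.exp (-α₂) - Real.exp (-α₁)) ≤ α₁ - α₂ := by
    nlinarith
  have hmono : Real.exp (-α₁) ≤ Real.exp (-α₂) := Real.exp_le_exp.mpr (by linarith)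
  have decomp : Real.exp α₁ * f (Real.exp (-α₁) * x) - Real.exp α₂ * f (Real.exp (-α₂) * x)
      = (Real.exp α₁ - Real.exp α₂) * f (Real.exp (-α₁) * x)
        + Real.exp α₂ * (f (Real.exp (-α₁) * x) - f (Real.exp (-α₂) * x)) := by ring
  rw [decomp]
  have e1 : |(Real.exp α₁ - Real.exp α₂) * f (Real.exp (-α₁) * x)|
      ≤ (Real.exp α₁ - Real.exp α₂) * (C * (1 + Real.exp (-α₁) * |x|)) := by
    rw [abs_mul, abs_of_nonneg (by linarith)]
    apply mul_le_mul_of_nonneg_left _ (by linarith)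
    calc |f (Real.exp (-α₁) * x)| ≤ C * (1 + |Real.exp (-α₁) * x|) := hgrowth _
      _ = C * (1 + Real.exp (-α₁) * |x|) := by
          rw [abs_mul, abs_of_pos (Real.exp_pos _)]
  have e2 : |Real.exp α₂ * (f (Real.exp (-α₁) * x) - f (Real.exp (-α₂) * x))|
      ≤ Real.exp α₂ * (C * ((Real.exp (-α₂) - Real.exp (-α₁)) * |x|)) := by
    rw [abs_mul, abs_of_pos ha₂]
    apply mul_le_mul_of_nonneg_left _ ha₂.le
    calc |f (Real.exp (-α₁) * x) - f (Real.exp (-α₂) * x)|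
        ≤ C * |Real.exp (-α₁) * x - Real.exp (-α₂) * x| := hlip _ _
      _ = C * ((Real.exp (-α₂) - Real.exp (-α₁)) * |x|) := by
          rw [show Real.exp (-α₁) * x - Real.exp (-α₂) * x
              = -((Real.exp (-α₂) - Real.exp (-α₁)) * x) by ring, abs_neg, abs_mul,
            abs_of_nonneg (by linarith)]
  have habs : 0 ≤ |x| := abs_nonneg x
  calc |(Real.exp α₁ - Real.exp α₂) * f (Real.exp (-α₁) * x)
        + Real.exp α₂ * (f (Real.exp (-α₁) * x) - f (Real.exp (-α₂) * x))|
      ≤ |(Real.exp α₁ - Real.exp α₂) * f (Real.exp (-α₁) * x)|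
        + |Real.exp α₂ * (f (Real.exp (-α₁) * x) - f (Real.exp (-α₂) * x))| := abs_add_le _ _
    _ ≤ (Real.exp α₁ - Real.exp α₂) * (C * (1 + Real.exp (-α₁) * |x|))
        + Real.exp α₂ * (C * ((Real.exp (-α₂) - Real.exp (-α₁)) * |x|)) := by
          linarith
    _ ≤ 2 * C * (1 + Real.exp α₁ + Real.exp α₂ + |x|) * (α₁ - α₂) := by
          have ht : (0:ℝ) ≤ α₁ - α₂ := by linarith
          nlinarith [mul_le_mul_of_nonneg_left key1 hC.le,
            mul_le_mul_of_nonneg_left (mul_le_mul_of_nonneg_right keyA habs) hC.le,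
            mul_le_mul_of_nonneg_left (mul_le_mul_of_nonneg_right key2 habs) hC.le,
            mul_nonneg hC.le (mul_nonneg (by positivity : (0:ℝ) ≤ 1 + Real.exp α₁ + Real.exp α₂) ht),
            mul_nonneg (mul_nonneg hC.le habs) ht]

/-- Lemma 3: if `f` has linear growth and is Lipschitz (both with constant `C`), then there is
`C′ = C′(C)` with `|e^{α₁} f(e^{−α₁}x) − e^{α₂} f(e^{−α₂}x)| ≤ C′(1+e^{α₁}+e^{α₂}+|x|)|α₁−α₂|`. -/
theorem stmt_12 (f : ℝ → ℝ) (C : ℝ) (hC : 0 < C)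
    (hgrowth : ∀ x : ℝ, |f x| ≤ C * (1 + |x|))
    (hlip : ∀ x y : ℝ, |f x - f y| ≤ C * |x - y|) :
    ∃ C' : ℝ, 0 < C' ∧ ∀ α₁ α₂ x : ℝ,
      |Real.exp α₁ * f (Real.exp (-α₁) * x) - Real.exp α₂ * f (Real.exp (-α₂) * x)|
        ≤ C' * (1 + Real.exp α₁ + Real.exp α₂ + |x|) * |α₁ - α₂| := by
  refine ⟨2 * C, by linarith, fun α₁ α₂ x => ?_⟩
  rcases le_total α₂ α₁ with h | h
  · rw [abs_of_nonneg (sub_nonneg.mpr h)]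
    exact stmt_12_key f C hC hgrowth hlip α₁ α₂ x h
  · rw [abs_sub_comm α₁ α₂, abs_of_nonneg (sub_nonneg.mpr h), abs_sub_comm,
      show (1 + Real.exp α₁ + Real.exp α₂ + |x|) = (1 + Real.exp α₂ + Real.exp α₁ + |x|) by ring]
    exact stmt_12_key f C hC hgrowth hlip α₂ α₁ x h
end
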